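/- arXiv:1701.08504 — 9 statements merged into one kernel-verified Lean document; each statement's English description precedes it below -/
import Mathlib

section
/- Let f : ℕ → ℕ be a multiplicative function (f(1) = 1 and f(ab) = f(a)f(b) whenever gcd(a,b) = 1) satisfying f(p^{k-1}) ≤ f(p^k) for every prime p and integer k ≥ 1. If n > 1 is weakly f-practical and p is a prime with f(p) ≤ f(q) for some prime q dividing n, then pn is also weakly f-practical. -/
open Finset

def Sf (f : ℕ → ℕ) (n : ℕ) : ℕ := ∑ d ∈ n.divisors, f d

def FPractical (f : ℕ → ℕ) (n : ℕ) : Prop :=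
  0 < n ∧ ∀ m : ℕ, 0 < m → m ≤ Sf f n →
    ∃ D : Finset ℕ, D ⊆ n.divisors ∧ m = ∑ d ∈ D, f d

def WeaklyFPractical (f : ℕ → ℕ) (n : ℕ) : Prop :=
  0 < n ∧ ∃ l : List ℕ,
    l.Nodup ∧
    l.toFinset = n.primeFactors ∧
    l.Pairwise (fun p q => f p ≤ f q) ∧
    ∀ i : Fin l.length,
      f (l.get i) ≤ Sf f (((l.take i).map fun p => p ^ n.factorization p).prod) + 1

lemma Sf_mono (f : ℕ → ℕ) {a b : ℕ} (h : a ∣ b) (hb : b ≠ 0) : Sf f a ≤ Sf f b :=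
  Finset.sum_le_sum_of_subset (Nat.divisors_subset_of_dvd hb h)

lemma prod_pow_dvd {L : List ℕ} {g h : ℕ → ℕ} (hle : ∀ r ∈ L, g r ≤ h r) :
    (L.map fun r => r ^ g r).prod ∣ (L.map fun r => r ^ h r).prod := by
  induction L with
  | nil => simp
  | cons a L ih =>
    simp only [List.map_cons, List.prod_cons]
    exact mul_dvd_mul (pow_dvd_pow a (hle a (by simp)))
      (ih fun r hr => hle r (by simp [hr]))

lemma prod_pow_pos {L : List ℕ} {g : ℕ → ℕ} (hpos : ∀ r ∈ L, 0 < r) :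
    0 < (L.map fun r => r ^ g r).prod := by
  apply List.prod_pos
  intro a ha
  obtain ⟨r, hr, rfl⟩ := List.mem_map.mp ha
  exact pow_pos (hpos r hr) _

/-- If n > 1 is weakly f-practical and p is a prime with f p ≤ f q for some prime q ∣ n,
then p * n is weakly f-practical. -/
theorem stmt2 (f : ℕ → ℕ) (hf1 : f 1 = 1)
    (hmul : ∀ a b : ℕ, Nat.Coprime a b → f (a * b) = f a * f b)
    (hmono : ∀ p k : ℕ, p.Prime → 1 ≤ k → f (p ^ (k - 1)) ≤ f (p ^ k))
    (n p q : ℕ) (hn : 1 < n) (hp : p.Prime) (hq : q.Prime) (hqn : q ∣ n)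
    (hfpq : f p ≤ f q) (hweak : WeaklyFPractical f n) :
    WeaklyFPractical f (p * n) := by
  obtain ⟨hn0, l, hnd, htf, hsort, hcond⟩ := hweak
  have hn0' : n ≠ 0 := hn0.ne'
  have hp0 : p ≠ 0 := hp.pos.ne'
  have hpn0 : 0 < p * n := Nat.mul_pos hp.pos hn0
  have hlprime : ∀ r ∈ l, r.Prime := by
    intro r hr
    have : r ∈ n.primeFactors := htf ▸ List.mem_toFinset.mpr hr
    exact Nat.prime_of_mem_primeFactors this
  have hfact : (p * n).factorization = p.factorization + n.factorization :=
    Nat.factorization_mul hp0 hn0'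
  by_cases hpn : p ∣ n
  · -- same list works; exponents only grow
    refine ⟨hpn0, l, hnd, ?_, hsort, ?_⟩
    · rw [Nat.primeFactors_mul hp0 hn0', htf, Nat.Prime.primeFactors hp]
      exact (Finset.union_eq_right.mpr (Finset.singleton_subset_iff.mpr
        (Nat.mem_primeFactors.mpr ⟨hp, hpn, hn0'⟩))).symm
    · intro i
      refine le_trans (hcond i) (Nat.add_le_add_right ?_ 1)
      apply Sf_mono
      · apply prod_pow_dvd
        intro r _
        rw [hfact]
        simp
      · exact (prod_pow_pos (fun r hr => (hlprime r (List.mem_of_mem_take hr)).pos)).ne'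
  · -- p ∤ n : insert p into the list
    have hpl : p ∉ l := fun h => hpn (Nat.dvd_of_mem_primeFactors (htf ▸ List.mem_toFinset.mpr h))
    set P : ℕ → Bool := fun r => decide (f r < f p) with hP
    set t := l.takeWhile P with ht
    set d := l.dropWhile P with hd
    have htd : t ++ d = l := List.takeWhile_append_dropWhile (p := P) (l := l)
    have hql : q ∈ l := List.mem_toFinset.mp (htf ▸ Nat.mem_primeFactors.mpr ⟨hq, hqn, hn0'⟩)
    -- every element of t satisfies f r < f p
    have htlt : ∀ r ∈ t, f r < f p := by
      intro r hr
      have := List.mem_takeWhile_imp hr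
      simpa [hP] using this
    -- d is nonempty since q fails the predicate
    have hdne : d ≠ [] := by
      intro hnil
      have : q ∈ t := by rw [← htd] at hql; simpa [hnil] using hql
      exact absurd (htlt q this) (not_lt.mpr hfpq)
    obtain ⟨x, xs, hx⟩ := List.exists_cons_of_ne_nil hdne
    -- head of d fails the predicate
    have hdhead : f p ≤ f x := by
      have h := List.head_dropWhile_not P (l := l) (hd ▸ hdne)
      simp only [← hd, hx, List.head_cons, hP, decide_eq_false_iff_not, not_lt] at h
      have e : ∀ (L : List ℕ) (w : L ≠ []), L = x :: xs → L.head w = x := by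
        rintro _ _ rfl; rfl
      exact le_trans h (le_of_eq (congrArg f (e _ _ hx)))
    -- every element of d has f p ≤ f r
    have hsd : d.Pairwise (fun a b => f a ≤ f b) :=
      List.Pairwise.sublist (List.dropWhile_sublist P) hsort
    have hdle : ∀ r ∈ d, f p ≤ f r := by
      intro r hr
      rw [hx] at hr hsd
      rcases List.mem_cons.mp hr with rfl | hr
      · exact hdhead
      · exact le_trans hdhead ((List.pairwise_cons.mp hsd).1 r hr)
    -- exponents agree on elements of l
    have hE : ∀ r, r ≠ p → (p * n).factorization r = n.factorization r := by
      intro r hrp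
      rw [hfact, hp.factorization]
      simp [Finsupp.single_apply, Ne.symm hrp]
    have hEp : (p * n).factorization p = 1 := by
      rw [hfact, hp.factorization]
      simp [Finsupp.single_apply, Nat.factorization_eq_zero_of_not_dvd hpn]
    have hlnep : ∀ r ∈ l, r ≠ p := fun r hr h => hpl (h ▸ hr)
    -- the new list
    refine ⟨hpn0, t ++ p :: d, ?_, ?_, ?_, ?_⟩
    · have hperm : (t ++ p :: d).Perm (p :: l) := by
        rw [← htd]; exact List.perm_middle
      exact hperm.nodup_iff.mpr (List.nodup_cons.mpr ⟨hpl, hnd⟩)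
    · rw [Nat.primeFactors_mul hp0 hn0', hp.primeFactors, ← htf, ← htd]
      ext r; simp; try tauto
    · rw [List.pairwise_append]
      refine ⟨List.Pairwise.sublist (List.takeWhile_prefix P).sublist hsort, ?_, ?_⟩
      · rw [List.pairwise_cons]
        exact ⟨hdle, hsd⟩
      · intro a ha b hb
        rcases List.mem_cons.mp hb with rfl | hb
        · exact le_of_lt (htlt a ha)
        · exact le_trans (le_of_lt (htlt a ha)) (hdle b hb)
    · intro i
      have hlen : (t ++ p :: d).length = l.length + 1 := by
        rw [← htd]; simp; omega
      have htlen : t.length ≤ l.length := by rw [← htd]; simp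
      have hdlen : t.length + d.length = l.length := by rw [← htd]; simp
      have hdpos : 0 < d.length := by rw [hx]; simp
      -- prefix products with the old exponents
      have hEprod : ∀ L : List ℕ, (∀ r ∈ L, r ≠ p) →
          (L.map fun r => r ^ (p * n).factorization r).prod
            = (L.map fun r => r ^ n.factorization r).prod := by
        intro L hL
        congr 1
        exact List.map_congr_left fun r hr => by rw [hE r (hL r hr)]
      have hpos : ∀ L : List ℕ, (∀ r ∈ L, r ∈ l ∨ r = p) →
          ((L.map fun r => r ^ (p * n).factorization r).prod) ≠ 0 := by
        intro L hL
        refine (prod_pow_pos ?_).ne'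
        intro r hr
        rcases hL r hr with h | rfl
        · exact (hlprime r h).pos
        · exact hp.pos
      rcases lt_trichotomy i.val t.length with hi | hi | hi
      · -- index inside t
        have hil : i.val < l.length := lt_of_lt_of_le hi htlen
        have hget : (t ++ p :: d).get i = l.get ⟨i.val, hil⟩ := by
          simp only [List.get_eq_getElem]
          rw [List.getElem_append_left hi, List.getElem_of_eq htd.symm hil,
            List.getElem_append_left hi]
        have htake : (t ++ p :: d).take i.val = l.take i.val := by
          rw [List.take_append_of_le_length (le_of_lt hi), ← htd,
            List.take_append_of_le_length (le_of_lt hi)]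
        rw [hget, htake]
        have hsub : ∀ r ∈ l.take i.val, r ≠ p :=
          fun r hr => hlnep r (List.mem_of_mem_take hr)
        rw [hEprod _ hsub]
        exact hcond ⟨i.val, hil⟩
      · -- index is p
        have hil : t.length < l.length := by omega
        have hget : (t ++ p :: d).get i = p := by
          simp only [List.get_eq_getElem]
          rw [List.getElem_append_right (le_of_eq hi.symm)]
          simp [hi]
        have htake : (t ++ p :: d).take i.val = l.take i.val := by
          rw [List.take_append_of_le_length (le_of_eq hi), ← htd,
            List.take_append_of_le_length (le_of_eq hi)]
        rw [hget, htake]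
        have hsub : ∀ r ∈ l.take i.val, r ≠ p :=
          fun r hr => hlnep r (List.mem_of_mem_take hr)
        rw [hEprod _ hsub, hi]
        -- f p ≤ f (l.get ⟨t.length⟩) = f x ≤ Sf (prefix) + 1
        have hgetd : l.get ⟨t.length, hil⟩ = x := by
          simp only [List.get_eq_getElem]
          rw [List.getElem_of_eq htd.symm hil, List.getElem_append_right le_rfl]
          simp [hx]
        have hc := hcond ⟨t.length, hil⟩
        rw [hgetd] at hc
        exact le_trans hdhead hc
      · -- index past p : corresponds to old index i.val - 1
        have hisLt := i.isLt
        have hil : i.val - 1 < l.length := by omega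
        have hi1 : t.length ≤ i.val - 1 := by omega
        have hidx : ↑i - t.length = (↑i - 1 - t.length) + 1 := by omega
        have hget : (t ++ p :: d).get i = l.get ⟨i.val - 1, hil⟩ := by
          simp only [List.get_eq_getElem]
          rw [List.getElem_append_right (le_of_lt hi), List.getElem_of_eq htd.symm hil,
            List.getElem_append_right hi1]
          simp [hidx]
        rw [hget]
        refine le_trans (hcond ⟨i.val - 1, hil⟩) (Nat.add_le_add_right ?_ 1)
        have hnew : (t ++ p :: d).take i.val = t ++ p :: d.take (i.val - 1 - t.length) := by
          rw [List.take_append, List.take_of_length_le (by omega), hidx,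
            List.take_succ_cons]
        have hold : l.take (i.val - 1) = t ++ d.take (i.val - 1 - t.length) := by
          rw [← htd, List.take_append, List.take_of_length_le hi1]
        -- old prefix divides new prefix
        apply Sf_mono
        · rw [hnew, hold]
          have hsub1 : ∀ r ∈ t, r ≠ p := fun r hr =>
            hlnep r (by rw [← htd]; exact List.mem_append_left _ hr)
          have hsub2 : ∀ r ∈ d.take (i.val - 1 - t.length), r ≠ p := fun r hr =>
            hlnep r (by rw [← htd]; exact List.mem_append_right _ (List.mem_of_mem_take hr))
          simp only [List.map_append, List.map_cons, List.prod_append, List.prod_cons]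
          rw [hEprod t hsub1, hEprod _ hsub2, hEp]
          exact ⟨p, by ring⟩
        · rw [hnew]
          apply hpos
          intro r hr
          rcases List.mem_append.mp hr with h | h
          · exact Or.inl (by rw [← htd]; exact List.mem_append_left _ h)
          · rcases List.mem_cons.mp h with rfl | h
            · exact Or.inr rfl
            · exact Or.inl (by
                rw [← htd]
                exact List.mem_append_right _ (List.mem_of_mem_take h))
end

section
/- Let f : ℕ → ℕ be a multiplicative function (f(1) = 1 and f(ab) = f(a)f(b) whenever gcd(a,b) = 1) satisfying f(p^{k-1}) ≤ f(p^k) for every prime p and integer k ≥ 1. Let n be f-practical and let p be a prime with gcd(p, n) = 1. Then for any positive integer k, the number np^k is f-practical if and only if f(p^i) ≤ S_f(np^{i-1}) + 1 holds for all 1 ≤ i ≤ k. -/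
open Finset

section Aux

variable {f : ℕ → ℕ}

lemma fpow_mono (hmono : ∀ p k : ℕ, p.Prime → 1 ≤ k → f (p ^ (k - 1)) ≤ f (p ^ k))
    {p : ℕ} (hp : p.Prime) {i j : ℕ} (h : i ≤ j) : f (p ^ i) ≤ f (p ^ j) := by
  induction j, h using Nat.le_induction with
  | base => exact le_rfl
  | succ j hj ih =>
    refine ih.trans ?_
    have := hmono p (j + 1) hp (by omega)
    simpa using this

lemma fpow_one_le (hf1 : f 1 = 1)
    (hmono : ∀ p k : ℕ, p.Prime → 1 ≤ k → f (p ^ (k - 1)) ≤ f (p ^ k))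
    {p : ℕ} (hp : p.Prime) (i : ℕ) : 1 ≤ f (p ^ i) := by
  have := fpow_mono hmono hp (Nat.zero_le i)
  simpa [hf1] using this

lemma f_one_le (hf1 : f 1 = 1)
    (hmul : ∀ a b : ℕ, Nat.Coprime a b → f (a * b) = f a * f b)
    (hmono : ∀ p k : ℕ, p.Prime → 1 ≤ k → f (p ^ (k - 1)) ≤ f (p ^ k)) :
    ∀ e : ℕ, 0 < e → 1 ≤ f e := by
  intro e
  induction e using Nat.strong_induction_on with
  | _ e ih =>
    intro he
    rcases eq_or_lt_of_le (show 1 ≤ e from he) with h1 | h1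
    · rw [← h1, hf1]
    · set p := e.minFac with hpdef
      have hp : p.Prime := Nat.minFac_prime (by omega)
      have he0 : e ≠ 0 := by omega
      set c := e / p ^ e.factorization p with hc
      have hco : Nat.Coprime p c := Nat.coprime_ordCompl hp he0
      have hsplit : p ^ e.factorization p * c = e := Nat.ordProj_mul_ordCompl_eq_self e p
      have hc0 : 0 < c := Nat.ordCompl_pos p he0
      have ha : 1 ≤ e.factorization p := by
        have : p ∣ e := Nat.minFac_dvd e
        rw [← Nat.Prime.pow_dvd_iff_le_factorization hp he0, pow_one]
        exact this
      have hclt : c < e := by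
        have h2 : 2 ≤ p ^ e.factorization p := by
          calc 2 ≤ p := hp.two_le
          _ = p ^ 1 := (pow_one p).symm
          _ ≤ p ^ e.factorization p := Nat.pow_le_pow_right hp.pos ha
        nlinarith [hsplit, hc0]
      have := hmul (p ^ e.factorization p) c (hco.pow_left _)
      rw [hsplit] at this
      rw [this]
      exact Nat.one_le_iff_ne_zero.mpr (Nat.mul_ne_zero (by have := fpow_one_le hf1 hmono hp (e.factorization p); omega) (by have := ih c hclt hc0; omega))

lemma Sf_mul (hf1 : f 1 = 1)
    (hmul : ∀ a b : ℕ, Nat.Coprime a b → f (a * b) = f a * f b)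
    {a b : ℕ} (hab : Nat.Coprime a b) : Sf f (a * b) = Sf f a * Sf f b := by
  classical
  set F : ArithmeticFunction ℕ := ⟨fun x => if x = 0 then 0 else f x, if_pos rfl⟩ with hF
  have hFapp : ∀ x : ℕ, x ≠ 0 → F x = f x := by
    intro x hx
    simp [hF, ArithmeticFunction.coe_mk, hx]
  have hFM : F.IsMultiplicative := by
    constructor
    · rw [hFapp 1 one_ne_zero, hf1]
    · intro m n hmn
      rcases eq_or_ne m 0 with rfl | hm
      · have hn1 : n = 1 := Nat.coprime_zero_left n |>.mp hmn
        subst hn1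
        simp [hF, ArithmeticFunction.coe_mk, hf1]
      rcases eq_or_ne n 0 with rfl | hn
      · have hm1 : m = 1 := Nat.coprime_zero_right m |>.mp hmn
        subst hm1
        simp [hF, ArithmeticFunction.coe_mk, hf1]
      rw [hFapp _ (Nat.mul_ne_zero hm hn), hFapp _ hm, hFapp _ hn]
      exact hmul m n hmn
  have key : ∀ x : ℕ, Sf f x = (ArithmeticFunction.zeta * F) x := by
    intro x
    rw [ArithmeticFunction.zeta_mul_apply]
    exact Finset.sum_congr rfl fun d hd =>
      (hFapp d (Nat.pos_of_mem_divisors hd).ne').symm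
  rw [key, key, key, (ArithmeticFunction.isMultiplicative_zeta.mul hFM).map_mul_of_coprime hab]

lemma Sf_prime_pow (hp : Nat.Prime p) (i : ℕ) :
    Sf f (p ^ i) = ∑ x ∈ Finset.range (i + 1), f (p ^ x) :=
  Nat.sum_divisors_prime_pow hp

lemma Sf_step (hf1 : f 1 = 1)
    (hmul : ∀ a b : ℕ, Nat.Coprime a b → f (a * b) = f a * f b)
    {n p : ℕ} (hp : p.Prime) (hcop : Nat.Coprime p n) {i : ℕ} (hi : 1 ≤ i) :
    Sf f (n * p ^ i) = Sf f (n * p ^ (i - 1)) + Sf f n * f (p ^ i) := by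
  obtain ⟨j, rfl⟩ : ∃ j, i = j + 1 := ⟨i - 1, by omega⟩
  have h1 : Nat.Coprime n (p ^ (j + 1)) := (hcop.symm).pow_right _
  have h2 : Nat.Coprime n (p ^ j) := (hcop.symm).pow_right _
  rw [Sf_mul hf1 hmul h1, show j + 1 - 1 = j from rfl, Sf_mul hf1 hmul h2,
    Sf_prime_pow hp, Sf_prime_pow hp, Finset.sum_range_succ (fun x => f (p ^ x)) (j + 1)]
  ring

lemma Sf_one_le (hf1 : f 1 = 1) {n : ℕ} (hn : 0 < n) : 1 ≤ Sf f n := by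
  have h1 : (1 : ℕ) ∈ n.divisors := Nat.one_mem_divisors.mpr hn.ne'
  calc 1 = f 1 := hf1.symm
  _ ≤ Sf f n := Finset.single_le_sum (fun d _ => Nat.zero_le _) h1

end Aux

lemma step_lemma {f : ℕ → ℕ} (hf1 : f 1 = 1)
    (hmul : ∀ a b : ℕ, Nat.Coprime a b → f (a * b) = f a * f b)
    (hmono : ∀ p k : ℕ, p.Prime → 1 ≤ k → f (p ^ (k - 1)) ≤ f (p ^ k))
    {n p : ℕ} (hn : FPractical f n) (hp : p.Prime) (hcop : Nat.Coprime p n)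
    {i : ℕ} (hi : 1 ≤ i) (hNp : FPractical f (n * p ^ (i - 1)))
    (hcond : f (p ^ i) ≤ Sf f (n * p ^ (i - 1)) + 1) :
    FPractical f (n * p ^ i) := by
  classical
  obtain ⟨hn0, hrep⟩ := hn
  obtain ⟨hN0, hNrep⟩ := hNp
  have hpi0 : 0 < p ^ i := Nat.pow_pos (n := i) hp.pos
  have hne : n * p ^ i ≠ 0 := by positivity
  refine ⟨by positivity, ?_⟩
  intro m hm hmle
  set N := n * p ^ (i - 1) with hNdef
  set F := f (p ^ i) with hFdef
  have hF1 : 1 ≤ F := fpow_one_le hf1 hmono hp i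
  have hsplit : Sf f (n * p ^ i) = Sf f N + Sf f n * F := Sf_step hf1 hmul hp hcop hi
  have hNdvd : N ∣ n * p ^ i := mul_dvd_mul_left n (pow_dvd_pow p (by omega))
  by_cases hcase : m ≤ Sf f N
  · obtain ⟨D, hD, hDm⟩ := hNrep m hm hcase
    exact ⟨D, hD.trans (Nat.divisors_subset_of_dvd hne hNdvd), hDm⟩
  · push_neg at hcase
    set a := m - Sf f N with ha
    have ha1 : 1 ≤ a := by omega
    set x := (a + F - 1) / F with hx
    have hdm := Nat.div_add_mod (a + F - 1) F
    have hmod : (a + F - 1) % F < F := Nat.mod_lt _ (by omega)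
    rw [← hx] at hdm
    have hxF1 : a ≤ F * x := by omega
    have hxF2 : F * x ≤ m := by omega
    have hx1 : 1 ≤ x := by
      rcases Nat.eq_zero_or_pos x with h | h
      · rw [h, Nat.mul_zero] at hxF1; omega
      · exact h
    have hxle : x ≤ Sf f n := by
      have haub : a ≤ F * Sf f n := by
        rw [hsplit] at hmle
        have : Sf f n * F = F * Sf f n := Nat.mul_comm _ _
        omega
      rw [hx, Nat.div_le_iff_le_mul_add_pred (by omega : 0 < F)]
      omega
    obtain ⟨S, hS, hSx⟩ := hrep x hx1 hxle
    have hSinj : ∀ u ∈ S, ∀ v ∈ S, u * p ^ i = v * p ^ i → u = v :=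
      fun u _ v _ h => Nat.eq_of_mul_eq_mul_right hpi0 h
    set D1 := S.image (· * p ^ i) with hD1
    have hD1sub : D1 ⊆ (n * p ^ i).divisors := by
      intro d hd
      rw [hD1, Finset.mem_image] at hd
      obtain ⟨u, hu, rfl⟩ := hd
      have hun : u ∣ n := (Nat.mem_divisors.mp (hS hu)).1
      exact Nat.mem_divisors.mpr ⟨mul_dvd_mul hun dvd_rfl, hne⟩
    have hD1sum : ∑ d ∈ D1, f d = F * x := by
      rw [hD1, Finset.sum_image hSinj]
      have : ∀ u ∈ S, f (u * p ^ i) = f u * F := by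
        intro u hu
        have hun : u ∣ n := (Nat.mem_divisors.mp (hS hu)).1
        exact hmul u (p ^ i) (((hcop.coprime_dvd_right hun).symm).pow_right i)
      rw [Finset.sum_congr rfl this, ← Finset.sum_mul, ← hSx, Nat.mul_comm]
    by_cases hr : m - F * x = 0
    · refine ⟨D1, hD1sub, ?_⟩
      rw [hD1sum]; omega
    · obtain ⟨D2, hD2, hD2sum⟩ := hNrep (m - F * x) (by omega) (by omega)
      have hdisj : Disjoint D1 D2 := by
        rw [Finset.disjoint_left]
        intro d hd1 hd2
        rw [hD1, Finset.mem_image] at hd1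
        obtain ⟨u, hu, rfl⟩ := hd1
        have hd2' : u * p ^ i ∣ N := (Nat.mem_divisors.mp (hD2 hd2)).1
        have hpiN : p ^ i ∣ N := (dvd_mul_left (p ^ i) u).trans hd2'
        have hNeq : N = p ^ (i - 1) * n := by rw [hNdef, Nat.mul_comm]
        have hpieq : p ^ i = p ^ (i - 1) * p := by
          rw [← pow_succ]; congr 1; omega
        rw [hNeq, hpieq] at hpiN
        have hpn : p ∣ n := (Nat.mul_dvd_mul_iff_left (Nat.pow_pos hp.pos)).mp
          (dvd_trans (dvd_refl _) hpiN)
        exact (hp.coprime_iff_not_dvd.mp hcop) hpn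
      refine ⟨D1 ∪ D2, Finset.union_subset hD1sub
        (hD2.trans (Nat.divisors_subset_of_dvd hne hNdvd)), ?_⟩
      rw [Finset.sum_union hdisj, hD1sum, ← hD2sum]
      omega

lemma forward_lemma {f : ℕ → ℕ} (hf1 : f 1 = 1)
    (hmul : ∀ a b : ℕ, Nat.Coprime a b → f (a * b) = f a * f b)
    (hmono : ∀ p k : ℕ, p.Prime → 1 ≤ k → f (p ^ (k - 1)) ≤ f (p ^ k))
    {n p : ℕ} (hn0 : 0 < n) (hp : p.Prime) (hcop : Nat.Coprime p n)
    {k : ℕ} (hP : FPractical f (n * p ^ k)) {i : ℕ} (hi1 : 1 ≤ i) (hik : i ≤ k) :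
    f (p ^ i) ≤ Sf f (n * p ^ (i - 1)) + 1 := by
  classical
  set N := n * p ^ (i - 1) with hNdef
  set M := Sf f N with hM
  have hne : n * p ^ k ≠ 0 := Nat.mul_ne_zero hn0.ne' (pow_pos hp.pos k).ne'
  have hNdvd : N ∣ n * p ^ k := mul_dvd_mul_left n (pow_dvd_pow p (by omega))
  have hself : n * p ^ k ∈ (n * p ^ k).divisors := Nat.mem_divisors_self _ hne
  have hnot : n * p ^ k ∉ N.divisors := by
    intro hmem
    have hle : n * p ^ k ≤ N := Nat.le_of_dvd (Nat.mul_pos hn0 (pow_pos hp.pos _)) (Nat.mem_divisors.mp hmem).1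
    have : p ^ (i - 1) < p ^ k := Nat.pow_lt_pow_right hp.one_lt (by omega)
    have : n * p ^ (i - 1) < n * p ^ k := mul_lt_mul_of_pos_left this hn0
    omega
  have hmle : M + 1 ≤ Sf f (n * p ^ k) := by
    have hlt : M < Sf f (n * p ^ k) := by
      refine Finset.sum_lt_sum_of_subset (Nat.divisors_subset_of_dvd hne hNdvd) hself hnot
        ?_ (fun j _ _ => Nat.zero_le _)
      exact f_one_le hf1 hmul hmono _ (by positivity)
    omega
  obtain ⟨D, hD, hDm⟩ := hP.2 (M + 1) (by omega) hmle
  set Dh := D.filter (fun d => p ^ i ∣ d) with hDh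
  set Dl := D.filter (fun d => ¬ p ^ i ∣ d) with hDl
  have hsum : ∑ d ∈ Dh, f d + ∑ d ∈ Dl, f d = M + 1 := by
    rw [hDh, hDl, Finset.sum_filter_add_sum_filter_not, ← hDm]
  have hlowsub : Dl ⊆ N.divisors := by
    intro d hd
    rw [hDl, Finset.mem_filter] at hd
    obtain ⟨hdD, hnd⟩ := hd
    have hddvd : d ∣ n * p ^ k := (Nat.mem_divisors.mp (hD hdD)).1
    have hd0 : d ≠ 0 := (Nat.pos_of_mem_divisors (hD hdD)).ne'
    set j := d.factorization p with hj
    set e := d / p ^ d.factorization p with he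
    have heq : p ^ j * e = d := Nat.ordProj_mul_ordCompl_eq_self d p
    have hji : j ≤ i - 1 := by
      by_contra hc
      exact hnd ((Nat.Prime.pow_dvd_iff_le_factorization hp hd0).mpr (by omega))
    have hecop : Nat.Coprime e (p ^ k) :=
      ((Nat.coprime_ordCompl hp hd0).symm).pow_right k
    have hen : e ∣ n := hecop.dvd_of_dvd_mul_right
      ((Nat.ordCompl_dvd d p).trans hddvd)
    have : d ∣ N := by
      rw [← heq, hNdef, Nat.mul_comm n]
      exact mul_dvd_mul (pow_dvd_pow p hji) hen
    exact Nat.mem_divisors.mpr ⟨this, (Nat.mul_pos hn0 (pow_pos hp.pos _)).ne'⟩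
  have hlow : ∑ d ∈ Dl, f d ≤ M := Finset.sum_le_sum_of_subset hlowsub
  have hnonempty : Dh.Nonempty := by
    rw [Finset.nonempty_iff_ne_empty]
    intro hemp
    rw [hemp, Finset.sum_empty] at hsum
    omega
  obtain ⟨d, hd⟩ := hnonempty
  rw [hDh, Finset.mem_filter] at hd
  obtain ⟨hdD, hpid⟩ := hd
  have hddvd : d ∣ n * p ^ k := (Nat.mem_divisors.mp (hD hdD)).1
  have hd0 : d ≠ 0 := (Nat.pos_of_mem_divisors (hD hdD)).ne'
  set j := d.factorization p with hj
  set e := d / p ^ d.factorization p with he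
  have heq : p ^ j * e = d := Nat.ordProj_mul_ordCompl_eq_self d p
  have hij : i ≤ j := (Nat.Prime.pow_dvd_iff_le_factorization hp hd0).mp hpid
  have hfd : f (p ^ i) ≤ f d := by
    have h1 : f d = f (p ^ j) * f e := by
      rw [← heq]
      exact hmul _ _ ((Nat.coprime_ordCompl hp hd0).pow_left j)
    have h2 : 1 ≤ f e := f_one_le hf1 hmul hmono e (Nat.ordCompl_pos p hd0)
    have h3 : f (p ^ i) ≤ f (p ^ j) := fpow_mono hmono hp hij
    calc f (p ^ i) ≤ f (p ^ j) := h3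
    _ ≤ f (p ^ j) * f e := Nat.le_mul_of_pos_right _ (by omega)
    _ = f d := h1.symm
  have hdle : f d ≤ ∑ x ∈ Dh, f x :=
    Finset.single_le_sum (fun x _ => Nat.zero_le _)
      (by rw [hDh, Finset.mem_filter]; exact ⟨hdD, hpid⟩)
  omega

/-- Construction theorem: for f-practical n and a prime p coprime to n,
n * p^k is f-practical iff f(p^i) ≤ S_f(n * p^(i-1)) + 1 for all 1 ≤ i ≤ k. -/
theorem stmt3 (f : ℕ → ℕ) (hf1 : f 1 = 1)
    (hmul : ∀ a b : ℕ, Nat.Coprime a b → f (a * b) = f a * f b)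
    (hmono : ∀ p k : ℕ, p.Prime → 1 ≤ k → f (p ^ (k - 1)) ≤ f (p ^ k))
    (n p : ℕ) (hn : FPractical f n) (hp : p.Prime) (hcop : Nat.Coprime p n)
    (k : ℕ) (hk : 1 ≤ k) :
    FPractical f (n * p ^ k) ↔
      ∀ i : ℕ, 1 ≤ i → i ≤ k → f (p ^ i) ≤ Sf f (n * p ^ (i - 1)) + 1 := by
  constructor
  · intro hP i hi1 hik
    exact forward_lemma hf1 hmul hmono hn.1 hp hcop hP hi1 hik
  · intro hcond
    have key : ∀ j : ℕ, j ≤ k → FPractical f (n * p ^ j) := by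
      intro j
      induction j with
      | zero => intro _; simpa using hn
      | succ j ih =>
        intro hjk
        have hprev : FPractical f (n * p ^ j) := ih (by omega)
        have : FPractical f (n * p ^ (j + 1)) := by
          refine step_lemma hf1 hmul hmono hn hp hcop (by omega : 1 ≤ j + 1)
            (by simpa using hprev) (by simpa using hcond (j + 1) (by omega) hjk)
        exact this
    exact key k le_rfl
end

section
/- Let f : ℕ → ℕ be a multiplicative function (f(1) = 1 and f(ab) = f(a)f(b) whenever gcd(a,b) = 1) satisfying f(p^{k-1}) ≤ f(p^k) for every prime p and integer k ≥ 1. A squarefree positive integer is f-practical if and only if it is weakly f-practical. -/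
open Finset

section Aux

variable {f : ℕ → ℕ}

lemma f_ge_one (hf1 : f 1 = 1)
    (hmul : ∀ a b : ℕ, Nat.Coprime a b → f (a * b) = f a * f b)
    (hmono : ∀ p k : ℕ, p.Prime → 1 ≤ k → f (p ^ (k - 1)) ≤ f (p ^ k)) :
    ∀ d, Squarefree d → 1 ≤ f d := by
  intro d
  induction d using Nat.strong_induction_on with
  | _ d ih =>
  intro hd
  rcases eq_or_ne d 1 with rfl | hne
  · simp [hf1]
  obtain ⟨p, hp, hpd⟩ := Nat.exists_prime_and_dvd hne
  obtain ⟨e, rfl⟩ := hpd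
  obtain ⟨hcop, hsp, hse⟩ := Nat.squarefree_mul_iff.mp hd
  have he0 : e ≠ 0 := by rintro rfl; exact (by simpa using hd.ne_zero)
  have helt : e < p * e := lt_mul_iff_one_lt_left (Nat.pos_of_ne_zero he0) |>.mpr hp.one_lt
  have hfe : 1 ≤ f e := ih e helt hse
  have hfp : 1 ≤ f p := by simpa [hf1] using hmono p 1 hp le_rfl
  rw [hmul p e hcop]
  exact Nat.one_le_iff_ne_zero.mpr (Nat.mul_ne_zero (by omega) (by omega))

lemma f_dvd_le (hmul : ∀ a b : ℕ, Nat.Coprime a b → f (a * b) = f a * f b)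
    (hge : ∀ d, Squarefree d → 1 ≤ f d)
    {a d : ℕ} (hd : Squarefree d) (had : a ∣ d) : f a ≤ f d := by
  obtain ⟨b, rfl⟩ := had
  obtain ⟨hcop, hsa, hsb⟩ := Nat.squarefree_mul_iff.mp hd
  rw [hmul a b hcop]
  calc f a = f a * 1 := (mul_one _).symm
  _ ≤ f a * f b := Nat.mul_le_mul_left _ (hge b hsb)

lemma Sf_pos (hf1 : f 1 = 1) {m : ℕ} (hm : m ≠ 0) : 1 ≤ Sf f m := by
  have h1 : (1 : ℕ) ∈ m.divisors := Nat.one_mem_divisors.mpr hm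
  calc 1 = f 1 := hf1.symm
  _ ≤ Sf f m := Finset.single_le_sum (f := f) (fun i _ => Nat.zero_le _) h1

lemma divisors_mul_prime {m p : ℕ} (hm : m ≠ 0) (hp : p.Prime) (hpm : ¬ p ∣ m) :
    (m * p).divisors = m.divisors ∪ m.divisors.image (p * ·) := by
  have hmp : m * p ≠ 0 := Nat.mul_ne_zero hm hp.pos.ne'
  ext d
  simp only [Nat.mem_divisors, Finset.mem_union, Finset.mem_image]
  constructor
  · rintro ⟨hd, -⟩
    by_cases hpd : p ∣ d
    · obtain ⟨e, rfl⟩ := hpd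
      right
      refine ⟨e, ⟨?_, hm⟩, rfl⟩
      have h' : p * e ∣ p * m := by rwa [mul_comm m p] at hd
      exact (mul_dvd_mul_iff_left hp.pos.ne').mp h'
    · left
      exact ⟨(Nat.Coprime.dvd_of_dvd_mul_right ((hp.coprime_iff_not_dvd.mpr hpd).symm) hd), hm⟩
  · rintro (⟨hd, -⟩ | ⟨e, ⟨he, -⟩, rfl⟩)
    · exact ⟨hd.trans (dvd_mul_right m p), hmp⟩
    · refine ⟨?_, hmp⟩
      rw [mul_comm m p]
      exact mul_dvd_mul_left p he

lemma Sf_mul_prime (hmul : ∀ a b : ℕ, Nat.Coprime a b → f (a * b) = f a * f b)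
    {m p : ℕ} (hm : m ≠ 0) (hp : p.Prime) (hpm : ¬ p ∣ m) :
    Sf f (m * p) = Sf f m + f p * Sf f m := by
  have hdisj : Disjoint m.divisors (m.divisors.image (p * ·)) := by
    rw [Finset.disjoint_right]
    rintro d hd hd'
    obtain ⟨e, _, rfl⟩ := Finset.mem_image.mp hd
    exact hpm ((dvd_mul_right p e).trans (Nat.dvd_of_mem_divisors hd'))
  rw [Sf, divisors_mul_prime hm hp hpm, Finset.sum_union hdisj,
    Finset.sum_image (fun x _ y _ h => Nat.eq_of_mul_eq_mul_left hp.pos h)]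
  congr 1
  rw [Sf, Finset.mul_sum]
  refine Finset.sum_congr rfl fun d hd => ?_
  exact hmul p d (hp.coprime_iff_not_dvd.mpr fun h => hpm (h.trans (Nat.dvd_of_mem_divisors hd)))

end Aux



lemma get_not_dvd_take {l : List ℕ} (hnd : l.Nodup) (hprime : ∀ q ∈ l, q.Prime)
    (i : ℕ) (hi : i < l.length) : ¬ l[i] ∣ (l.take i).prod := by
  intro hdvd
  have hp : (l[i]).Prime := hprime _ (List.getElem_mem hi)
  obtain ⟨a, ha, hpa⟩ := hp.prime.dvd_prod_iff.mp hdvd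
  have ham : a ∈ l := List.take_subset _ _ ha
  have hap : a.Prime := hprime a ham
  have heq : l[i] = a := (Nat.prime_dvd_prime_iff_eq hp hap).mp hpa
  obtain ⟨j, hj, hja⟩ := List.getElem_of_mem ha
  have hji : j < i := by
    have := hj
    simp only [List.length_take] at this
    omega
  have hjl : j < l.length := lt_of_lt_of_le hji (le_of_lt hi)
  have hja' : l[j] = a := by
    rw [← hja]
    simp
  have : i = j := hnd.getElem_inj_iff.mp (by rw [heq, hja'])
  omega

lemma take_map_eq {n : ℕ} (hsq : Squarefree n) {l : List ℕ}
    (htf : l.toFinset = n.primeFactors) (i : ℕ) :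
    ((l.take i).map fun p => p ^ n.factorization p) = l.take i := by
  have h : ∀ a ∈ l.take i, a ^ n.factorization a = a := by
    intro a ha
    have hal : a ∈ l := List.take_subset _ _ ha
    have hap : a ∈ n.primeFactors := htf ▸ List.mem_toFinset.mpr hal
    have h1 : n.factorization a ≤ 1 := hsq.natFactorization_le_one a
    have h2 : n.factorization a ≠ 0 := by
      rw [← Finsupp.mem_support_iff, Nat.support_factorization]; exact hap
    have h3 : n.factorization a = 1 := by omega
    rw [h3, pow_one]
  calc ((l.take i).map fun p => p ^ n.factorization p) = (l.take i).map id :=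
        List.map_congr_left h
  _ = l.take i := List.map_id _

lemma prod_of_list (n : ℕ) (hsq : Squarefree n) {l : List ℕ} (hnd : l.Nodup)
    (htf : l.toFinset = n.primeFactors) : l.prod = n := by
  have h := List.prod_toFinset (id : ℕ → ℕ) hnd
  rw [List.map_id] at h
  rw [← Nat.prod_primeFactors_of_squarefree hsq, ← htf, ← h]
  rfl

lemma step_lemma_s4 (hf1 : f 1 = 1)
    (hmul : ∀ a b : ℕ, Nat.Coprime a b → f (a * b) = f a * f b)
    {m p : ℕ} (hm : m ≠ 0) (hp : p.Prime) (hpm : ¬ p ∣ m)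
    (hfp1 : 1 ≤ f p) (hfp : f p ≤ Sf f m + 1)
    (ih : ∀ k, 0 < k → k ≤ Sf f m → ∃ D, D ⊆ m.divisors ∧ k = ∑ d ∈ D, f d) :
    ∀ k, 0 < k → k ≤ Sf f (m * p) → ∃ D, D ⊆ (m * p).divisors ∧ k = ∑ d ∈ D, f d := by
  intro k hk hkle
  have hmp0 : m * p ≠ 0 := Nat.mul_ne_zero hm hp.pos.ne'
  have hs1 : 1 ≤ Sf f m := Sf_pos hf1 hm
  rw [Sf_mul_prime hmul hm hp hpm] at hkle
  set s := Sf f m with hs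
  by_cases hks : k ≤ s
  · obtain ⟨D, hD, hsum⟩ := ih k hk hks
    exact ⟨D, hD.trans (Nat.divisors_subset_of_dvd hmp0 (dvd_mul_right m p)), hsum⟩
  push_neg at hks
  set t := k - s with ht
  set x := (t + f p - 1) / f p with hx
  have hx_ub : x * f p ≤ t + f p - 1 := Nat.div_mul_le_self _ _
  have hx_lb : t ≤ x * f p := by
    have h1 : (t + f p - 1) % f p < f p := Nat.mod_lt _ hfp1
    have h2 : f p * x + (t + f p - 1) % f p = t + f p - 1 := Nat.div_add_mod _ _
    have h3 : f p * x = x * f p := mul_comm _ _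
    omega
  have hx1 : 1 ≤ x := by
    rcases Nat.eq_zero_or_pos x with h0 | h; · rw [h0] at hx_lb; omega
    exact h
  have hts : t ≤ s * f p := by
    have : f p * s = s * f p := mul_comm _ _
    omega
  have hxs : x ≤ s := by
    by_contra h
    push_neg at h
    have h2 : (s + 1) * f p ≤ x * f p := Nat.mul_le_mul_right _ h
    have h3 : (s + 1) * f p = s * f p + f p := by ring
    omega
  have hxk : x * f p ≤ k := by omega
  set y := k - x * f p with hy
  have hys : y ≤ s := by omega
  obtain ⟨Dx, hDx, hxsum⟩ := ih x hx1 hxs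
  have hinj : ∀ a ∈ Dx, ∀ b ∈ Dx, p * a = p * b → a = b :=
    fun a _ b _ h => Nat.eq_of_mul_eq_mul_left hp.pos h
  have hndvd : ∀ d ∈ m.divisors, ¬ p ∣ d :=
    fun d hd h => hpm (h.trans (Nat.dvd_of_mem_divisors hd))
  have hDx'sub : Dx.image (p * ·) ⊆ (m * p).divisors := by
    intro d hd
    obtain ⟨e, he, rfl⟩ := Finset.mem_image.mp hd
    rw [Nat.mem_divisors]
    refine ⟨?_, hmp0⟩
    rw [mul_comm m p]
    exact mul_dvd_mul_left p (Nat.dvd_of_mem_divisors (hDx he))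
  have hDx'sum : ∑ d ∈ Dx.image (p * ·), f d = f p * x := by
    rw [Finset.sum_image hinj, hxsum, Finset.mul_sum]
    exact Finset.sum_congr rfl fun d hd =>
      hmul p d (hp.coprime_iff_not_dvd.mpr (hndvd d (hDx hd)))
  rcases Nat.eq_zero_or_pos y with hy0 | hy1
  · refine ⟨Dx.image (p * ·), hDx'sub, ?_⟩
    rw [hDx'sum]
    have : f p * x = x * f p := mul_comm _ _
    omega
  · obtain ⟨Dy, hDy, hysum⟩ := ih y hy1 hys
    have hdisj : Disjoint Dy (Dx.image (p * ·)) := by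
      rw [Finset.disjoint_right]
      rintro d hd hd'
      obtain ⟨e, _, rfl⟩ := Finset.mem_image.mp hd
      exact hndvd _ (hDy hd') (dvd_mul_right p e)
    refine ⟨Dy ∪ Dx.image (p * ·), Finset.union_subset
      (hDy.trans (Nat.divisors_subset_of_dvd hmp0 (dvd_mul_right m p))) hDx'sub, ?_⟩
    rw [Finset.sum_union hdisj, hDx'sum, ← hysum]
    have : f p * x = x * f p := mul_comm _ _
    omega


/-- A squarefree positive integer is f-practical iff it is weakly f-practical. -/
theorem stmt4 (f : ℕ → ℕ) (hf1 : f 1 = 1)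
    (hmul : ∀ a b : ℕ, Nat.Coprime a b → f (a * b) = f a * f b)
    (hmono : ∀ p k : ℕ, p.Prime → 1 ≤ k → f (p ^ (k - 1)) ≤ f (p ^ k))
    (n : ℕ) (hn : 0 < n) (hsq : Squarefree n) :
    FPractical f n ↔ WeaklyFPractical f n := by
  constructor
  · intro h
    revert h

    rintro ⟨-, hFP⟩
    classical
    have hge1 := f_ge_one hf1 hmul hmono
    set le : ℕ → ℕ → Bool := fun p q => decide (f p ≤ f q) with hle
    set l := n.primeFactors.toList.mergeSort le with hl
    have hperm : List.Perm l n.primeFactors.toList := List.mergeSort_perm _ _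
    have hnd : l.Nodup := hperm.nodup_iff.mpr (Finset.nodup_toList _)
    have htf : l.toFinset = n.primeFactors := by
      rw [List.toFinset_eq_of_perm _ _ hperm, Finset.toList_toFinset]
    have hsort : l.Pairwise (fun p q => f p ≤ f q) := by
      have h := List.pairwise_mergeSort (le := le)
        (fun a b c h1 h2 => by
          simp only [hle, decide_eq_true_eq] at h1 h2 ⊢; omega)
        (fun a b => by simp only [hle, Bool.or_eq_true, decide_eq_true_eq]; omega)
        n.primeFactors.toList
      exact h.imp (fun {a b} h => by simpa [hle] using h)
    refine ⟨hn, l, hnd, htf, hsort, ?_⟩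
    have hprime : ∀ q ∈ l, q.Prime := fun q hq =>
      Nat.prime_of_mem_primeFactors (htf ▸ List.mem_toFinset.mpr hq)
    intro i
    rw [take_map_eq hsq htf]
    set mi := (l.take (i : ℕ)).prod with hmi
    by_contra hcon
    push_neg at hcon
    set p := l.get i with hp'
    have hpl : p ∈ l := List.get_mem l i
    have hp : p.Prime := hprime p hpl
    have hmidvd : mi ∣ n := by
      rw [← prod_of_list n hsq hnd htf]
      exact ⟨(l.drop (i : ℕ)).prod, by rw [← List.prod_append, List.take_append_drop]⟩
    have hmi0 : 0 < mi := Nat.pos_of_dvd_of_pos hmidvd hn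
    have hpmi : ¬ p ∣ mi := get_not_dvd_take hnd hprime i i.2
    have hpn : p ∣ n := Nat.dvd_of_mem_primeFactors (htf ▸ List.mem_toFinset.mpr hpl)
    have hmine : mi ≠ n := fun h => hpmi (h ▸ hpn)
    have hmilt : mi < n := lt_of_le_of_ne (Nat.le_of_dvd hn hmidvd) hmine
    have hnnot : n ∉ mi.divisors := fun h => absurd (Nat.le_of_dvd hmi0 (Nat.dvd_of_mem_divisors h)) (by omega)
    have hSfle : Sf f mi + f n ≤ Sf f n := by
      have hsub : insert n mi.divisors ⊆ n.divisors :=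
        Finset.insert_subset (Nat.mem_divisors_self n hn.ne')
          (Nat.divisors_subset_of_dvd hn.ne' hmidvd)
      calc Sf f mi + f n = ∑ d ∈ insert n mi.divisors, f d := by
            rw [Finset.sum_insert hnnot]; exact (add_comm _ _)
      _ ≤ Sf f n := Finset.sum_le_sum_of_subset hsub
    have hfn1 : 1 ≤ f n := hge1 n hsq
    set k := Sf f mi + 1 with hk
    obtain ⟨D, hD, hsum⟩ := hFP k (by omega) (by omega)
    have hDsub : D ⊆ mi.divisors := by
      intro d hd
      have hdn : d ∣ n := Nat.dvd_of_mem_divisors (hD hd)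
      have hsd : Squarefree d := hsq.squarefree_of_dvd hdn
      rw [Nat.mem_divisors]
      refine ⟨?_, hmi0.ne'⟩
      by_contra hdm
      have hexq : ∃ q, q.Prime ∧ q ∣ d ∧ ¬ q ∣ mi := by
        by_contra hq
        push_neg at hq
        apply hdm
        rw [← Nat.prod_primeFactors_of_squarefree hsd]
        exact Finset.prod_primes_dvd _
          (fun q hq' => (Nat.prime_of_mem_primeFactors hq').prime)
          (fun q hq' => hq q (Nat.prime_of_mem_primeFactors hq')
            (Nat.dvd_of_mem_primeFactors hq'))
      obtain ⟨q, hq, hqd, hqmi⟩ := hexq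
      have hql : q ∈ l := List.mem_toFinset.mp
        (htf ▸ Nat.mem_primeFactors.mpr ⟨hq, hqd.trans hdn, hn.ne'⟩)
      obtain ⟨j, hj, hja⟩ := List.getElem_of_mem hql
      have hij : (i : ℕ) ≤ j := by
        by_contra hji
        push_neg at hji
        apply hqmi
        have hjt : j < (l.take (i : ℕ)).length := by
          simp only [List.length_take]
          omega
        have hmem : q ∈ l.take (i : ℕ) := by
          have : (l.take (i : ℕ))[j] = q := by simpa using hja
          exact this ▸ List.getElem_mem hjt
        exact List.dvd_prod hmem
      have hfpq : f p ≤ f q := by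
        rcases eq_or_lt_of_le hij with heq | hlt
        · have hq_eq : q = p := by
            subst heq
            rw [hp', List.get_eq_getElem]
            exact hja.symm
          rw [hq_eq]
        · have := hsort.rel_get_of_lt (a := i) (b := ⟨j, hj⟩) hlt
          simpa [hja, hp'] using this
      have hfqd : f q ≤ f d := f_dvd_le hmul hge1 hsd hqd
      have hfdk : f d ≤ k := by
        rw [hsum] at *
        exact Finset.single_le_sum (fun x _ => Nat.zero_le _) hd
      omega
    have : k ≤ Sf f mi := by
      rw [hsum]
      exact Finset.sum_le_sum_of_subset hDsub
    omega
  · intro h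
    revert h

    rintro ⟨-, l, hnd, htf, hsort, hcond⟩
    refine ⟨hn, ?_⟩
    have hge1 := f_ge_one hf1 hmul hmono
    have hprime : ∀ q ∈ l, q.Prime := fun q hq =>
      Nat.prime_of_mem_primeFactors (htf ▸ List.mem_toFinset.mpr hq)
    have hnl : l.prod = n := prod_of_list n hsq hnd htf
    have hdvdn : ∀ i : ℕ, (l.take i).prod ∣ n := by
      intro i
      rw [← hnl]
      exact ⟨(l.drop i).prod, by rw [← List.prod_append, List.take_append_drop]⟩
    have h0 : ∀ i : ℕ, (l.take i).prod ≠ 0 :=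
      fun i => (Nat.pos_of_dvd_of_pos (hdvdn i) hn).ne'
    have main : ∀ i, i ≤ l.length → ∀ k, 0 < k → k ≤ Sf f ((l.take i).prod) →
        ∃ D, D ⊆ ((l.take i).prod).divisors ∧ k = ∑ d ∈ D, f d := by
      intro i
      induction i with
      | zero =>
        intro _ k hk hkle
        simp only [List.take_zero, List.prod_nil] at hkle ⊢
        have hSf1 : Sf f 1 = 1 := by simp [Sf, hf1]
        rw [hSf1] at hkle
        refine ⟨{1}, by simp, ?_⟩
        simp [hf1]
        omega
      | succ i ih =>
        intro hi k hk hkle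
        have hi' : i < l.length := hi
        have hp : (l[i]).Prime := hprime _ (List.getElem_mem hi')
        have hfp1 : 1 ≤ f l[i] := hge1 _ hp.squarefree
        have hfple : f l[i] ≤ Sf f ((l.take i).prod) + 1 := by
          have := hcond ⟨i, hi'⟩
          rwa [List.get_eq_getElem, take_map_eq hsq htf] at this
        have hstep := step_lemma_s4 hf1 hmul (h0 i) hp
          (get_not_dvd_take hnd hprime i hi') hfp1 hfple (ih (le_of_lt hi'))
        rw [List.prod_take_succ l i hi'] at hkle ⊢
        exact hstep k hk hkle
    intro k hk hkle
    have := main l.length le_rfl k hk (by rwa [List.take_length, hnl])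
    rwa [List.take_length, hnl] at this
end

section
/- Every positive integer n is τ-practical, where τ is the number-of-divisors function. That is, for every positive integer n and every positive integer m ≤ ∑_{d | n} τ(d), there is a set D of distinct divisors of n with m = ∑_{d ∈ D} τ(d). -/
open Finset

lemma greedy (f : ℕ → ℕ) (s : Finset ℕ)
    (hcond : ∀ x ∈ s, f x ≤ 1 + ∑ y ∈ s.filter (· < x), f y) :
    ∀ m ≤ ∑ x ∈ s, f x, ∃ D ⊆ s, m = ∑ d ∈ D, f d := by
  induction s using Finset.strongInduction with
  | _ s ih =>
    intro m hm
    rcases eq_or_ne m 0 with rfl | hm0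
    · exact ⟨∅, empty_subset _, by simp⟩
    rcases s.eq_empty_or_nonempty with rfl | hs
    · simp at hm; omega
    set x := s.max' hs with hx
    have hxs : x ∈ s := s.max'_mem hs
    have herase : s.erase x ⊂ s := erase_ssubset hxs
    have hfe : ∀ z ∈ s.erase x, (s.erase x).filter (· < z) = s.filter (· < z) := by
      intro z hz
      rw [Finset.filter_erase]
      apply Finset.erase_eq_of_notMem
      simp only [mem_filter]
      rintro ⟨-, hlt⟩
      exact absurd (s.le_max' z (mem_of_mem_erase hz)) (not_le.2 hlt)
    have hcond' : ∀ z ∈ s.erase x, f z ≤ 1 + ∑ y ∈ (s.erase x).filter (· < z), f y := by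
      intro z hz
      rw [hfe z hz]
      exact hcond z (mem_of_mem_erase hz)
    have hsum : f x + ∑ y ∈ s.erase x, f y = ∑ y ∈ s, f y :=
      Finset.add_sum_erase _ _ hxs
    have heq : s.erase x = s.filter (· < x) := by
      ext y
      simp only [mem_erase, mem_filter]
      constructor
      · rintro ⟨hne, hy⟩
        exact ⟨hy, lt_of_le_of_ne (s.le_max' y hy) hne⟩
      · rintro ⟨hy, hlt⟩
        exact ⟨ne_of_lt hlt, hy⟩
    by_cases hmx : f x ≤ m
    · obtain ⟨D, hD, hDsum⟩ := ih _ herase hcond' (m - f x) (by omega)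
      have hxD : x ∉ D := fun h => (Finset.mem_erase.1 (hD h)).1 rfl
      refine ⟨insert x D, ?_, ?_⟩
      · exact Finset.insert_subset hxs (hD.trans (erase_subset _ _))
      · rw [Finset.sum_insert hxD]; omega
    · have hmle : m ≤ ∑ y ∈ s.erase x, f y := by
        have := hcond x hxs
        rw [← heq] at this
        omega
      obtain ⟨D, hD, hDsum⟩ := ih _ herase hcond' m hmle
      exact ⟨D, hD.trans (erase_subset _ _), hDsum⟩

/-- Every positive integer is τ-practical, where τ is the number-of-divisors function. -/
theorem stmt8 (n : ℕ) (hn : 0 < n) :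
    FPractical (fun m => m.divisors.card) n := by
  refine ⟨hn, fun m hm0 hm => ?_⟩
  apply greedy (fun m => m.divisors.card) n.divisors ?_ m hm
  intro d hd
  have hdn : d ∣ n := (Nat.mem_divisors.1 hd).1
  have hd0 : d ≠ 0 := fun h => by subst h; exact absurd (Nat.eq_zero_of_zero_dvd hdn) hn.ne'
  have hdd : d ∈ d.divisors := Nat.mem_divisors_self d hd0
  have hsub : d.divisors.erase d ⊆ n.divisors.filter (· < d) := by
    intro e he
    obtain ⟨hne, he'⟩ := Finset.mem_erase.1 he
    have hed : e ∣ d := (Nat.mem_divisors.1 he').1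
    refine Finset.mem_filter.2 ⟨Nat.mem_divisors.2 ⟨hed.trans hdn, hn.ne'⟩, ?_⟩
    exact lt_of_le_of_ne (Nat.le_of_dvd (Nat.pos_of_ne_zero hd0) hed) hne
  have h1 : ∀ e ∈ d.divisors.erase d, 1 ≤ e.divisors.card := by
    intro e he
    have he' := (Finset.mem_erase.1 he).2
    have he0 : e ≠ 0 := fun h => by
      subst h; exact hd0 (Nat.eq_zero_of_zero_dvd (Nat.mem_divisors.1 he').1)
    exact Finset.card_pos.2 ⟨e, Nat.mem_divisors_self e he0⟩
  calc d.divisors.card = 1 + (d.divisors.erase d).card := by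
        rw [Finset.card_erase_of_mem hdd]
        have : 1 ≤ d.divisors.card := Finset.card_pos.2 ⟨d, hdd⟩
        omega
    _ ≤ 1 + ∑ e ∈ d.divisors.erase d, e.divisors.card := by
        have := Finset.card_nsmul_le_sum (d.divisors.erase d) (fun e => e.divisors.card) 1 h1
        simpa using this
    _ ≤ 1 + ∑ e ∈ n.divisors.filter (· < d), e.divisors.card := by
        exact Nat.add_le_add_left (Finset.sum_le_sum_of_subset hsub) 1
end

section
/- Fix a positive integer n and define the multiplicative function f_n : ℕ → ℕ by f_n(1) = 1 and f_n(p^k) = 2 if the prime p divides n, and f_n(p^k) = 3 otherwise (extended multiplicatively, so f_n(m) = ∏_{p^k ∥ m} f_n(p^k)). Then the set of f_n-practical numbers is exactly {1} ∪ {m ≥ 1 : gcd(m, n) > 1}, and this set has asymptotic density 1 − φ(n)/n, i.e., (1/N)·#{m ≤ N : m is f_n-practical} tends to 1 − φ(n)/n as N → ∞. -/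
open Finset

open scoped Classical

/-- The multiplicative function with f_n(p^k) = 2 if p ∣ n and 3 otherwise. -/
def fdens (n m : ℕ) : ℕ := ∏ p ∈ m.primeFactors, (if p ∣ n then 2 else 3)

lemma fdens_one (n : ℕ) : fdens n 1 = 1 := by simp [fdens]

lemma fdens_pos (n m : ℕ) : 0 < fdens n m := by
  apply Finset.prod_pos; intro p _; split <;> norm_num

lemma fdens_prime (n q : ℕ) (hq : q.Prime) : fdens n q = if q ∣ n then 2 else 3 := by
  simp [fdens, hq.primeFactors]

lemma fdens_le_three (n q : ℕ) (hq : q.Prime) : fdens n q ≤ 3 := by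
  rw [fdens_prime n q hq]; split <;> norm_num

lemma two_le_fdens_prime (n q : ℕ) (hq : q.Prime) : 2 ≤ fdens n q := by
  rw [fdens_prime n q hq]; split <;> norm_num

lemma fdens_mul_pow (n q d j : ℕ) (hq : q.Prime) (hj : j ≠ 0) (hd : d ≠ 0)
    (hqd : ¬ q ∣ d) : fdens n (d * q ^ j) = fdens n d * fdens n q := by
  have h1 : (d * q ^ j).primeFactors = d.primeFactors ∪ {q} := by
    rw [Nat.primeFactors_mul hd (pow_ne_zero j hq.ne_zero),
      Nat.primeFactors_prime_pow hj hq]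
  have h2 : q ∉ d.primeFactors := by
    simp [Nat.mem_primeFactors, hqd]
  rw [fdens, h1, Finset.prod_union (by simpa using h2)]
  simp [fdens, hq.primeFactors]

lemma divisors_decomp (m q k : ℕ) (hq : q.Prime) (hm : 0 < m) (hqm : ¬ q ∣ m) :
    (m * q ^ (k + 1)).divisors
      = (m * q ^ k).divisors ∪ (m.divisors).image (· * q ^ (k + 1)) ∧
    Disjoint ((m * q ^ k).divisors) ((m.divisors).image (· * q ^ (k + 1))) := by
  have hq0 : 0 < q := hq.pos
  have hne1 : m * q ^ (k + 1) ≠ 0 := by positivity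
  have hne2 : m * q ^ k ≠ 0 := by positivity
  constructor
  · ext d
    simp only [Nat.mem_divisors, Finset.mem_union, Finset.mem_image]
    constructor
    · rintro ⟨hd, -⟩
      have hd' : d ∈ (m * q ^ (k+1)).divisors := Nat.mem_divisors.mpr ⟨hd, hne1⟩
      rw [Nat.divisors_mul] at hd'
      rw [Finset.mem_mul] at hd'
      obtain ⟨a, ha, b, hb, rfl⟩ := hd'
      rw [Nat.divisors_prime_pow hq] at hb
      simp only [Finset.mem_map, Finset.mem_range, Function.Embedding.coeFn_mk] at hb
      obtain ⟨j, hj, rfl⟩ := hb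
      have ha' := (Nat.mem_divisors.mp ha).1
      rcases Nat.lt_succ_iff_lt_or_eq.mp hj with hj' | rfl
      · left
        exact ⟨mul_dvd_mul ha' (pow_dvd_pow q (Nat.lt_succ_iff.mp hj')), hne2⟩
      · right
        exact ⟨a, ⟨ha', hm.ne'⟩, rfl⟩
    · rintro (⟨hd, -⟩ | ⟨a, ⟨ha, -⟩, rfl⟩)
      · exact ⟨hd.trans (mul_dvd_mul_left m (pow_dvd_pow q (Nat.le_succ k))), hne1⟩
      · exact ⟨mul_dvd_mul ha dvd_rfl, hne1⟩
  · rw [Finset.disjoint_left]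
    rintro d hd1 hd2
    simp only [Finset.mem_image] at hd2
    obtain ⟨a, ha, rfl⟩ := hd2
    have h1 : q ^ (k + 1) ∣ m * q ^ k := (dvd_mul_left _ a).trans (Nat.mem_divisors.mp hd1).1
    have h2 : q * q ^ k ∣ m * q ^ k := by rwa [← pow_succ']
    have := (Nat.mul_dvd_mul_iff_right (pow_pos hq.pos k)).mp h2
    exact hqm this

lemma sum_image_mul_pow (n m q k : ℕ) (hq : q.Prime) (hqm : ¬ q ∣ m) (E : Finset ℕ)
    (hE : E ⊆ m.divisors) :
    ∑ d ∈ E.image (· * q ^ (k + 1)), fdens n d = (∑ d ∈ E, fdens n d) * fdens n q := by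
  rw [Finset.sum_image (fun x _ y _ h => Nat.eq_of_mul_eq_mul_right (pow_pos hq.pos _) h),
    Finset.sum_mul]
  refine Finset.sum_congr rfl fun d hd => ?_
  have hd' := hE hd
  exact fdens_mul_pow n q d (k + 1) hq (Nat.succ_ne_zero k)
    (Nat.pos_of_mem_divisors hd').ne'
    (fun h => hqm (h.trans (Nat.mem_divisors.mp hd').1))

lemma Sf_rec (n m q k : ℕ) (hq : q.Prime) (hm : 0 < m) (hqm : ¬ q ∣ m) :
    Sf (fdens n) (m * q ^ (k + 1))
      = Sf (fdens n) (m * q ^ k) + Sf (fdens n) m * fdens n q := by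
  obtain ⟨he, hdisj⟩ := divisors_decomp m q k hq hm hqm
  rw [Sf, he, Finset.sum_union hdisj,
    sum_image_mul_pow n m q k hq hqm m.divisors (Finset.Subset.refl _)]
  rfl

lemma arith_split (S S' v m' : ℕ) (h2 : 2 ≤ v) (hv : v ≤ S + 1) (hSle : S ≤ S')
    (hc : S' < m') (hle : m' ≤ S' + S * v) :
    ∃ t r, t ≤ S ∧ r ≤ S' ∧ m' = r + t * v := by
  refine ⟨(m' - S' + v - 1) / v, m' - ((m' - S' + v - 1) / v) * v, ?_, ?_, ?_⟩ <;>
  · have hdm := Nat.div_add_mod (m' - S' + v - 1) v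
    have hmod : (m' - S' + v - 1) % v < v := Nat.mod_lt _ (by omega)
    have hvt2 : v * ((m' - S' + v - 1) / v) ≤ m' - S' + v - 1 := by omega
    have hvt1 : m' - S' ≤ v * ((m' - S' + v - 1) / v) := by omega
    have hxS : m' - S' ≤ S * v := by omega
    have htS : (m' - S' + v - 1) / v ≤ S := by
      have hvt3 : v * ((m' - S' + v - 1) / v) < v * (S + 1) := by
        have h1 : v * ((m' - S' + v - 1) / v) < S * v + v := by omega
        calc v * ((m' - S' + v - 1) / v) < S * v + v := h1
          _ = v * (S + 1) := by ring
      exact Nat.lt_succ_iff.mp (Nat.lt_of_mul_lt_mul_left hvt3)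
    have hcomm : ((m' - S' + v - 1) / v) * v = v * ((m' - S' + v - 1) / v) := Nat.mul_comm _ _
    omega

lemma step_lemma_s9 (n m q : ℕ) (hq : q.Prime) (hm : 0 < m) (hqm : ¬ q ∣ m)
    (hv : fdens n q ≤ Sf (fdens n) m + 1) (hp : FPractical (fdens n) m) :
    ∀ k, FPractical (fdens n) (m * q ^ k) := by
  intro k
  induction k with
  | zero => simpa using hp
  | succ k IH =>
    have hq0 : 0 < q := hq.pos
    have hMne : m * q ^ k ≠ 0 := by positivity
    have hne1 : m * q ^ (k + 1) ≠ 0 := by positivity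
    have hsub : (m * q ^ k).divisors ⊆ (m * q ^ (k + 1)).divisors :=
      Nat.divisors_subset_of_dvd hne1 (mul_dvd_mul_left m (pow_dvd_pow q (Nat.le_succ k)))
    have hSle : Sf (fdens n) m ≤ Sf (fdens n) (m * q ^ k) :=
      Finset.sum_le_sum_of_subset (Nat.divisors_subset_of_dvd hMne (dvd_mul_right m _))
    have hv2 : 2 ≤ fdens n q := two_le_fdens_prime n q hq
    have hSf : Sf (fdens n) (m * q ^ (k + 1))
        = Sf (fdens n) (m * q ^ k) + Sf (fdens n) m * fdens n q := Sf_rec n m q k hq hm hqm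
    obtain ⟨he, hdisj⟩ := divisors_decomp m q k hq hm hqm
    refine ⟨by positivity, fun m' hm'pos hm'le => ?_⟩
    by_cases hc : m' ≤ Sf (fdens n) (m * q ^ k)
    · obtain ⟨D, hD, hDs⟩ := IH.2 m' hm'pos hc
      exact ⟨D, hD.trans hsub, hDs⟩
    · push_neg at hc
      rw [hSf] at hm'le
      obtain ⟨t, r, htS, hrS, hmrt⟩ := arith_split (Sf (fdens n) m)
        (Sf (fdens n) (m * q ^ k)) (fdens n q) m' hv2 hv hSle hc hm'le
      have hrep1 : ∃ D ⊆ (m * q ^ k).divisors, r = ∑ d ∈ D, fdens n d := by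
        rcases Nat.eq_zero_or_pos r with h | h
        · exact ⟨∅, Finset.empty_subset _, by simp [h]⟩
        · exact IH.2 _ h hrS
      have hrep2 : ∃ D ⊆ m.divisors, t = ∑ d ∈ D, fdens n d := by
        rcases Nat.eq_zero_or_pos t with h | h
        · exact ⟨∅, Finset.empty_subset _, by simp [h]⟩
        · exact hp.2 _ h htS
      obtain ⟨D1, hD1, hD1s⟩ := hrep1
      obtain ⟨D2, hD2, hD2s⟩ := hrep2
      refine ⟨D1 ∪ D2.image (· * q ^ (k + 1)), ?_, ?_⟩
      · rw [he]
        exact Finset.union_subset_union hD1 (Finset.image_subset_image hD2)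
      · have hdisj' : Disjoint D1 (D2.image (· * q ^ (k + 1))) :=
          Finset.disjoint_of_subset_left hD1
            (Finset.disjoint_of_subset_right (Finset.image_subset_image hD2) hdisj)
        rw [Finset.sum_union hdisj', sum_image_mul_pow n m q k hq hqm D2 hD2,
          ← hD1s, ← hD2s, hmrt]

lemma Sf_one (n : ℕ) : Sf (fdens n) 1 = 1 := by
  rw [Sf, Nat.divisors_one, Finset.sum_singleton, fdens_one]

lemma fpractical_one (n : ℕ) : FPractical (fdens n) 1 := by
  refine ⟨one_pos, fun m hm hle => ?_⟩
  rw [Sf_one] at hle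
  interval_cases m
  exact ⟨{1}, by simp [Nat.divisors_one], by simp [fdens_one]⟩

lemma practical_of_gcd (n : ℕ) : ∀ m : ℕ, 0 < m →
    (∃ p, p.Prime ∧ p ∣ m ∧ p ∣ n) → FPractical (fdens n) m := by
  intro m
  induction m using Nat.strong_induction_on with
  | _ m IH =>
    rintro hm ⟨p, hp, hpm, hpn⟩
    by_cases hq : ∃ q, q.Prime ∧ q ∣ m ∧ q ≠ p
    · obtain ⟨q, hq', hqd, hne⟩ := hq
      have hk : 0 < m.factorization q := hq'.factorization_pos_of_dvd hm.ne' hqd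
      have heq : q ^ m.factorization q * ordCompl[q] m = m :=
        Nat.ordProj_mul_ordCompl_eq_self m q
      have hm0pos : 0 < ordCompl[q] m := Nat.ordCompl_pos q hm.ne'
      have hqm0 : ¬ q ∣ ordCompl[q] m := Nat.not_dvd_ordCompl hq' hm.ne'
      have hlt : ordCompl[q] m < m := by
        have h2 : 2 ≤ q ^ m.factorization q :=
          le_trans hq'.two_le (Nat.le_self_pow hk.ne' q)
        calc ordCompl[q] m < 2 * ordCompl[q] m := by omega
          _ ≤ q ^ m.factorization q * ordCompl[q] m := by
              exact Nat.mul_le_mul_right _ h2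
          _ = m := heq
      have hpm0 : p ∣ ordCompl[q] m := by
        have hcop : p.Coprime (q ^ m.factorization q) :=
          Nat.Coprime.pow_right _ ((Nat.coprime_primes hp hq').mpr (fun h => hne h.symm))
        have : p ∣ q ^ m.factorization q * ordCompl[q] m := by rw [heq]; exact hpm
        exact (Nat.Coprime.dvd_of_dvd_mul_left hcop this)
      have hprac : FPractical (fdens n) (ordCompl[q] m) :=
        IH _ hlt hm0pos ⟨p, hp, hpm0, hpn⟩
      have hS3 : 3 ≤ Sf (fdens n) (ordCompl[q] m) := by
        have hsub : ({1, p} : Finset ℕ) ⊆ (ordCompl[q] m).divisors := by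
          intro d hd
          simp only [Finset.mem_insert, Finset.mem_singleton] at hd
          rcases hd with rfl | rfl
          · exact Nat.one_mem_divisors.mpr hm0pos.ne'
          · exact Nat.mem_divisors.mpr ⟨hpm0, hm0pos.ne'⟩
        have hps : ∑ d ∈ ({1, p} : Finset ℕ), fdens n d = 3 := by
          rw [Finset.sum_pair hp.one_lt.ne]
          rw [fdens_one, fdens_prime n p hp, if_pos hpn]
        calc (3 : ℕ) = ∑ d ∈ ({1, p} : Finset ℕ), fdens n d := hps.symm
          _ ≤ Sf (fdens n) (ordCompl[q] m) := Finset.sum_le_sum_of_subset hsub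
      have := step_lemma_s9 n (ordCompl[q] m) q hq' hm0pos hqm0
        (le_trans (fdens_le_three n q hq') (by omega)) hprac (m.factorization q)
      rwa [mul_comm, heq] at this
    · push_neg at hq
      have hmeq : m = p ^ m.primeFactorsList.length :=
        Nat.eq_prime_pow_of_unique_prime_dvd hm.ne'
          (fun {q} hq' hqd => hq q hq' hqd)
      have h1 : FPractical (fdens n) 1 := fpractical_one n
      have hv : fdens n p ≤ Sf (fdens n) 1 + 1 := by
        rw [Sf_one, fdens_prime n p hp, if_pos hpn]
      have := step_lemma_s9 n 1 p hp one_pos (by simpa using hp.one_lt.ne') hv h1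
        (m.primeFactorsList.length)
      rwa [one_mul, ← hmeq] at this

lemma not_practical (n m : ℕ) (hm : 1 < m) (hg : Nat.gcd m n = 1) :
    ¬ FPractical (fdens n) m := by
  rintro ⟨-, h⟩
  have hm0 : m ≠ 0 := by omega
  have hsub : ({1, m} : Finset ℕ) ⊆ m.divisors := by
    intro d hd
    simp only [Finset.mem_insert, Finset.mem_singleton] at hd
    rcases hd with rfl | rfl
    · exact Nat.one_mem_divisors.mpr hm0
    · exact Nat.mem_divisors.mpr ⟨dvd_rfl, hm0⟩
  have h2 : 2 ≤ Sf (fdens n) m := by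
    calc (2:ℕ) = ∑ d ∈ ({1, m} : Finset ℕ), 1 := by rw [Finset.sum_pair hm.ne]
      _ ≤ ∑ d ∈ ({1, m} : Finset ℕ), fdens n d :=
          Finset.sum_le_sum (fun d _ => (fdens_pos n d))
      _ ≤ Sf (fdens n) m := Finset.sum_le_sum_of_subset hsub
  obtain ⟨D, hD, hsum⟩ := h 2 (by norm_num) h2
  have key : ∀ d ∈ D.erase 1, 3 ∣ fdens n d := by
    intro d hd
    have hd1 : d ≠ 1 := Finset.ne_of_mem_erase hd
    have hdm := hD (Finset.mem_of_mem_erase hd)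
    have hdpos : 0 < d := Nat.pos_of_mem_divisors hdm
    have hdvd : d ∣ m := (Nat.mem_divisors.mp hdm).1
    have hcard : d.primeFactors.Nonempty := by
      rw [Nat.nonempty_primeFactors]
      omega
    have : fdens n d = ∏ _p ∈ d.primeFactors, 3 := by
      refine Finset.prod_congr rfl (fun r hr => ?_)
      rw [if_neg]
      intro hrn
      have hrm : r ∣ m := (Nat.dvd_of_mem_primeFactors hr).trans hdvd
      have hr' : (r:ℕ) ∣ Nat.gcd m n := Nat.dvd_gcd hrm hrn
      rw [hg] at hr'
      exact (Nat.prime_of_mem_primeFactors hr).one_lt.ne' (Nat.dvd_one.mp hr')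
    rw [this, Finset.prod_const]
    exact dvd_pow_self 3 (Finset.card_ne_zero_of_mem hcard.choose_spec)
  have hdvd3 : 3 ∣ ∑ d ∈ D.erase 1, fdens n d := Finset.dvd_sum key
  by_cases h1 : 1 ∈ D
  · have := Finset.sum_erase_add D (fdens n) h1
    rw [fdens_one] at this
    omega
  · rw [Finset.erase_eq_of_notMem h1] at hdvd3
    omega


section Dens
variable (n : ℕ)

def Cco (n N : ℕ) : ℕ := ((Finset.Ico 1 (N + 1)).filter (n.Coprime ·)).card

lemma Cco_mul (hn : 0 < n) : ∀ k, Cco n (k * n) = k * n.totient := by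
  intro k
  induction k with
  | zero => simp [Cco]
  | succ k IH =>
    have hsplit : Finset.Ico 1 ((k + 1) * n + 1)
        = Finset.Ico 1 (k * n + 1) ∪ Finset.Ico (k * n + 1) (k * n + 1 + n) := by
      rw [Finset.Ico_union_Ico_eq_Ico (by omega) (by omega)]
      congr 1
      ring
    rw [Cco, hsplit, Finset.filter_union, Finset.card_union_of_disjoint
      (Finset.disjoint_filter_filter (Finset.Ico_disjoint_Ico_consecutive 1 (k*n+1) (k*n+1+n)))]
    rw [Nat.filter_coprime_Ico_eq_totient n (k * n + 1)]
    rw [Cco] at IH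
    rw [IH]
    ring

lemma Cco_mono {N M : ℕ} (h : N ≤ M) : Cco n N ≤ Cco n M :=
  Finset.card_le_card (Finset.filter_subset_filter _ (Finset.Ico_subset_Ico le_rfl (by omega)))

lemma Cco_le (N : ℕ) : Cco n N ≤ N := by
  calc Cco n N ≤ (Finset.Ico 1 (N + 1)).card := Finset.card_le_card (Finset.filter_subset _ _)
    _ = N := by rw [Nat.card_Ico]; omega

lemma one_le_Cco (N : ℕ) (hN : 1 ≤ N) : 1 ≤ Cco n N := by
  have : 1 ∈ (Finset.Ico 1 (N + 1)).filter (n.Coprime ·) := by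
    simp [Nat.coprime_one_right, Finset.mem_Ico]
    omega
  exact Finset.card_pos.mpr ⟨1, this⟩

lemma Cco_bounds (hn : 0 < n) (N : ℕ) :
    (N / n) * n.totient ≤ Cco n N ∧ Cco n N ≤ (N / n + 1) * n.totient := by
  constructor
  · rw [← Cco_mul n hn]
    exact Cco_mono n (Nat.div_mul_le_self N n)
  · rw [← Cco_mul n hn]
    apply Cco_mono n
    have h1 := Nat.div_add_mod N n
    have h2 := Nat.mod_lt N hn
    have h3 : (N / n + 1) * n = n * (N / n) + n := by ring
    omega

lemma tendsto_Cco (hn : 0 < n) :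
    Filter.Tendsto (fun N : ℕ => (Cco n N : ℝ) / N) Filter.atTop
      (nhds ((n.totient : ℝ) / n)) := by
  have hsub : Filter.Tendsto (fun N : ℕ => (Cco n N : ℝ) / N - (n.totient : ℝ) / n)
      Filter.atTop (nhds 0) := by
    apply squeeze_zero_norm' (a := fun N : ℕ => (n.totient : ℝ) / N)
    · filter_upwards [Filter.eventually_ge_atTop 1] with N hN
      have hNpos : (0 : ℝ) < N := by exact_mod_cast hN
      have hnpos : (0 : ℝ) < n := by exact_mod_cast hn
      have hb := Cco_bounds n hn N
      have hq1 : ((N / n : ℕ) : ℝ) * n ≤ N := by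
        exact_mod_cast Nat.div_mul_le_self N n
      have hq2 : (N : ℝ) ≤ ((N / n : ℕ) : ℝ) * n + n := by
        have h1 := Nat.div_add_mod N n
        have h2 := Nat.mod_lt N hn
        have h3 : N / n * n = n * (N / n) := Nat.mul_comm _ _
        have h4 : N ≤ N / n * n + n := by omega
        have : (N : ℝ) ≤ ((N / n * n + n : ℕ) : ℝ) := by exact_mod_cast h4
        push_cast at this
        linarith
      have hb1 : ((N / n : ℕ) : ℝ) * n.totient ≤ Cco n N := by exact_mod_cast hb.1
      have hb2 : (Cco n N : ℝ) ≤ (((N / n : ℕ) : ℝ) + 1) * n.totient := by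
        exact_mod_cast hb.2
      have hφ : (0 : ℝ) ≤ n.totient := by positivity
      have e : (Cco n N : ℝ) / N - (n.totient : ℝ) / n
          = ((Cco n N : ℝ) * n - (n.totient : ℝ) * N) / (N * n) := by
        field_simp
      rw [Real.norm_eq_abs, e, abs_div, abs_of_pos (mul_pos hNpos hnpos),
        div_le_div_iff₀ (mul_pos hNpos hnpos) hNpos]
      have habs : |(Cco n N : ℝ) * n - (n.totient : ℝ) * N| ≤ (n.totient : ℝ) * n := by
        rw [abs_le]
        constructor
        · nlinarith
        · nlinarith
      nlinarith
    · exact tendsto_const_div_atTop_nhds_zero_nat _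
  have := hsub.add (tendsto_const_nhds (x := (n.totient : ℝ) / n))
  simpa using this


end Dens

lemma fpractical_iff (n : ℕ) (hn : 0 < n) (m : ℕ) :
    FPractical (fdens n) m ↔ (m = 1 ∨ (1 ≤ m ∧ 1 < Nat.gcd m n)) := by
  constructor
  · intro h
    have hm0 := h.1
    by_cases h1 : m = 1
    · exact Or.inl h1
    · right
      refine ⟨hm0, ?_⟩
      by_contra hg
      push_neg at hg
      have hgpos : 0 < Nat.gcd m n := Nat.gcd_pos_of_pos_left n hm0
      have hg1 : Nat.gcd m n = 1 := by omega
      exact not_practical n m (by omega) hg1 h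
  · rintro (rfl | ⟨h1, hg⟩)
    · exact fpractical_one n
    · have hgne : Nat.gcd m n ≠ 1 := by omega
      have hp : (Nat.gcd m n).minFac.Prime := Nat.minFac_prime hgne
      refine practical_of_gcd n m h1 ⟨(Nat.gcd m n).minFac, hp, ?_, ?_⟩
      · exact (Nat.minFac_dvd _).trans (Nat.gcd_dvd_left m n)
      · exact (Nat.minFac_dvd _).trans (Nat.gcd_dvd_right m n)

lemma card_filter_eq (n : ℕ) (hn : 0 < n) (N : ℕ) (hN : 1 ≤ N) :
    ((Finset.Icc 1 N).filter fun m => FPractical (fdens n) m).card = N + 1 - Cco n N := by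
  have hIcc : Finset.Icc 1 N = Finset.Ico 1 (N + 1) := (Finset.Ico_add_one_right_eq_Icc 1 N).symm
  have hcongr : ((Finset.Icc 1 N).filter fun m => FPractical (fdens n) m)
      = (Finset.Ico 1 (N + 1)).filter
        (fun m => m = 1 ∨ (1 ≤ m ∧ 1 < Nat.gcd m n)) := by
    rw [hIcc]
    exact Finset.filter_congr (fun x _ => by rw [fpractical_iff n hn x])
  have hnot : (Finset.Ico 1 (N + 1)).filter
        (fun m => ¬ (m = 1 ∨ (1 ≤ m ∧ 1 < Nat.gcd m n)))
      = ((Finset.Ico 1 (N + 1)).filter (n.Coprime ·)).erase 1 := by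
    ext x
    simp only [Finset.mem_filter, Finset.mem_erase, Finset.mem_Ico, Nat.Coprime]
    constructor
    · rintro ⟨⟨hx1, hx2⟩, hx3⟩
      push_neg at hx3
      have hgpos : 0 < Nat.gcd x n := Nat.gcd_pos_of_pos_left n hx1
      have := hx3.2 hx1
      refine ⟨hx3.1, ⟨hx1, hx2⟩, ?_⟩
      rw [Nat.gcd_comm]
      omega
    · rintro ⟨hx1, ⟨hx2, hx3⟩, hx4⟩
      rw [Nat.gcd_comm] at hx4
      refine ⟨⟨hx2, hx3⟩, ?_⟩
      push_neg
      exact ⟨hx1, fun _ => by omega⟩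
  have hkey := Finset.card_filter_add_card_filter_not
    (s := Finset.Ico 1 (N + 1)) (p := fun m => m = 1 ∨ (1 ≤ m ∧ 1 < Nat.gcd m n))
  rw [hnot] at hkey
  have h1mem : (1 : ℕ) ∈ (Finset.Ico 1 (N + 1)).filter (n.Coprime ·) := by
    simp only [Finset.mem_filter, Finset.mem_Ico, Nat.Coprime]
    exact ⟨⟨le_refl 1, by omega⟩, Nat.coprime_one_right n⟩
  have herase : (((Finset.Ico 1 (N + 1)).filter (n.Coprime ·)).erase 1).card
      = Cco n N - 1 := by
    rw [Finset.card_erase_of_mem h1mem]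
    rfl
  have hcardIco : (Finset.Ico 1 (N + 1)).card = N := by rw [Nat.card_Ico]; omega
  have hCle := Cco_le n N
  have hCge := one_le_Cco n N hN
  rw [hcongr]
  omega

/-- The f_n-practical numbers are exactly 1 together with the positive integers not coprime
to n, and this set has asymptotic density 1 - φ(n)/n. -/
theorem stmt9 (n : ℕ) (hn : 0 < n) :
    (∀ m : ℕ, FPractical (fdens n) m ↔ (m = 1 ∨ (1 ≤ m ∧ 1 < Nat.gcd m n))) ∧
    Filter.Tendsto
      (fun N : ℕ =>
        (((Finset.Icc 1 N).filter fun m => FPractical (fdens n) m).card : ℝ) / N)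
      Filter.atTop (nhds (1 - (Nat.totient n : ℝ) / n)) := by
  refine ⟨fun m => fpractical_iff n hn m, ?_⟩
  have hmain : Filter.Tendsto
      (fun N : ℕ => (1 : ℝ) + 1 / N - (Cco n N : ℝ) / N)
      Filter.atTop (nhds (1 + 0 - (Nat.totient n : ℝ) / n)) :=
    (tendsto_const_nhds.add tendsto_one_div_atTop_nhds_zero_nat).sub (tendsto_Cco n hn)
  have hval : (1 : ℝ) + 0 - (Nat.totient n : ℝ) / n = 1 - (Nat.totient n : ℝ) / n := by
    ring
  rw [hval] at hmain
  apply hmain.congr'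
  filter_upwards [Filter.eventually_ge_atTop 1] with N hN
  have hNpos : (0 : ℝ) < N := by exact_mod_cast hN
  rw [card_filter_eq n hn N hN]
  have hCle := Cco_le n N
  have hcast : ((N + 1 - Cco n N : ℕ) : ℝ) = (N : ℝ) + 1 - (Cco n N : ℝ) := by
    have : Cco n N ≤ N + 1 := by omega
    push_cast [Nat.cast_sub this]
    ring
  rw [hcast]
  field_simp
end

section
/- The densities of the f-practical sets are dense in [0,1]: for every real α ∈ [0,1] and every ε > 0, there exists a multiplicative function f : ℕ → ℕ (f(1) = 1, f(ab) = f(a)f(b) for gcd(a,b) = 1, and f(p^{k-1}) ≤ f(p^k) for all primes p and integers k ≥ 1) such that the set of f-practical numbers has an asymptotic density δ with |δ − α| < ε. -/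
open Finset

open scoped Classical

namespace Stmt10Aux

lemma rep (f ord : ℕ → ℕ) :
    ∀ (D : Finset ℕ), (∀ d ∈ D, f d ≤ 1 + ∑ e ∈ D.filter (fun e => ord e < ord d), f e) →
    ∀ m ≤ ∑ d ∈ D, f d, ∃ E ⊆ D, m = ∑ d ∈ E, f d := by
  intro D
  induction D using Finset.strongInduction with
  | _ D ih =>
    intro hcomp m hm
    rcases D.eq_empty_or_nonempty with rfl | hne
    · exact ⟨∅, by simpa using Nat.le_zero.mp (by simpa using hm)⟩
    · obtain ⟨d, hd, hmax⟩ := D.exists_max_image ord hne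
      set D' := D.erase d with hD'
      have hss : D' ⊂ D := Finset.erase_ssubset hd
      have hsum : f d + ∑ e ∈ D', f e = ∑ e ∈ D, f e := Finset.add_sum_erase D f hd
      have hcomp' : ∀ e ∈ D', f e ≤ 1 + ∑ x ∈ D'.filter (fun x => ord x < ord e), f x := by
        intro e he
        have hfe : D'.filter (fun x => ord x < ord e) = D.filter (fun x => ord x < ord e) := by
          rw [hD', Finset.filter_erase]
          refine Finset.erase_eq_of_notMem ?_
          simp only [Finset.mem_filter, not_and, not_lt]
          exact fun _ => hmax e (Finset.mem_of_mem_erase he)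
        rw [hfe]
        exact hcomp e (Finset.mem_of_mem_erase he)
      by_cases hmd : f d ≤ m
      · obtain ⟨E', hE', hsE'⟩ := ih D' hss hcomp' (m - f d) (by omega)
        refine ⟨insert d E', ?_, ?_⟩
        · exact Finset.insert_subset hd (hE'.trans (Finset.erase_subset _ _))
        · have hdE' : d ∉ E' := fun h => (Finset.notMem_erase d D) (hE' h)
          rw [Finset.sum_insert hdE']
          omega
      · have hfil : D.filter (fun x => ord x < ord d) ⊆ D' := by
          intro x hx
          simp only [Finset.mem_filter] at hx
          exact Finset.mem_erase.mpr ⟨fun h => by simp [h] at hx, hx.1⟩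
        have : m ≤ ∑ e ∈ D', f e := by
          have h1 := hcomp d hd
          have h2 : ∑ x ∈ D.filter (fun x => ord x < ord d), f x ≤ ∑ e ∈ D', f e :=
            Finset.sum_le_sum_of_subset hfil
          omega
        obtain ⟨E, hE, hsE⟩ := ih D' hss hcomp' m this
        exact ⟨E, hE.trans (Finset.erase_subset _ _), hsE⟩


def myf (S : Finset ℕ) (n : ℕ) : ℕ := 3 ^ ((n.primeFactors \ S).card)

lemma myf_one (S : Finset ℕ) : myf S 1 = 1 := by simp [myf]

lemma myf_mul (S : Finset ℕ) (a b : ℕ) (h : Nat.Coprime a b) :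
    myf S (a * b) = myf S a * myf S b := by
  rcases eq_or_ne a 0 with rfl | ha
  · have : b = 1 := by simpa [Nat.coprime_zero_left] using h
    subst this; simp [myf]
  rcases eq_or_ne b 0 with rfl | hb
  · have : a = 1 := by simpa [Nat.coprime_zero_right] using h
    subst this; simp [myf]
  have hd : Disjoint a.primeFactors b.primeFactors := Nat.Coprime.disjoint_primeFactors h
  rw [myf, myf, myf, Nat.primeFactors_mul ha hb, ← pow_add]
  congr 1
  rw [union_sdiff_distrib]
  exact card_union_of_disjoint (hd.mono sdiff_le sdiff_le)

lemma myf_pow (S : Finset ℕ) (p k : ℕ) (hp : p.Prime) (hk : 1 ≤ k) :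
    myf S (p ^ (k - 1)) ≤ myf S (p ^ k) := by
  rcases eq_or_lt_of_le hk with hk2 | hk2
  · rw [← hk2]; simp only [myf, pow_zero]
    simpa using Nat.one_le_pow _ 3 (by norm_num)
  · have h1 : (p ^ (k-1)).primeFactors = {p} := Nat.primeFactors_prime_pow (by omega) hp
    have h2 : (p ^ k).primeFactors = {p} := Nat.primeFactors_prime_pow (by omega) hp
    rw [myf, myf, h1, h2]


lemma sum_pow_powerset (T : Finset ℕ) : ∑ U ∈ T.powerset, 3 ^ U.card = 4 ^ T.card := by
  classical
  refine Finset.induction_on T (by simp) ?_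
  intro a s ha ih
  rw [Finset.sum_powerset_insert ha]
  have h2 : ∑ t ∈ s.powerset, 3 ^ (insert a t).card = 3 * ∑ t ∈ s.powerset, 3 ^ t.card := by
    rw [Finset.mul_sum]
    refine Finset.sum_congr rfl fun t ht => ?_
    have hat : a ∉ t := fun h => ha (Finset.mem_powerset.mp ht h)
    rw [Finset.card_insert_of_notMem hat, pow_succ, mul_comm]
  rw [h2, ih, Finset.card_insert_of_notMem ha, pow_succ]
  ring

lemma arith (j : ℕ) : 3 * 3 ^ j ≤ 1 + 2 * 4 ^ j := by
  induction j with
  | zero => norm_num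
  | succ j ih =>
    have h4 : 1 ≤ 4 ^ j := Nat.one_le_pow _ _ (by norm_num)
    have h3 : 3 * 3 ^ (j + 1) = 3 * (3 * 3 ^ j) := by ring
    have h4' : 4 ^ (j + 1) = 4 * 4 ^ j := by rw [pow_succ, mul_comm]
    omega

lemma key (S : Finset ℕ) (hS : ∀ p ∈ S, p.Prime) {n d p : ℕ} (hn : n ≠ 0)
    (hdn : d ∣ n) (hpS : p ∈ S) (hpn : p ∣ n) :
    myf S d ≤ 1 + ∑ e ∈ n.divisors.filter (fun e => myf S e < myf S d), myf S e := by
  classical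
  set T := d.primeFactors \ S with hTdef
  have hpp : p.Prime := hS p hpS
  have hp1 : (1 : ℕ) ≠ p := (Nat.Prime.one_lt hpp).ne
  have hTprime : ∀ q ∈ T, q.Prime := fun q hq =>
    Nat.prime_of_mem_primeFactors (Finset.mem_sdiff.mp hq).1
  have hpT : p ∉ T := fun h => (Finset.mem_sdiff.mp h).2 hpS
  set I := (T.powerset.erase T) ×ˢ ({1, p} : Finset ℕ) with hI
  have hmem : ∀ U b, (U, b) ∈ I → U ⊆ T ∧ U ≠ T ∧ (b = 1 ∨ b = p) := by
    intro U b hx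
    rw [hI, Finset.mem_product, Finset.mem_erase, Finset.mem_powerset] at hx
    refine ⟨hx.1.2, hx.1.1, ?_⟩
    rcases Finset.mem_insert.mp hx.2 with h | h
    · exact Or.inl h
    · exact Or.inr (Finset.mem_singleton.mp h)
  have hprodpf : ∀ U : Finset ℕ, U ⊆ T → (U.prod id).primeFactors = U := by
    intro U hU
    exact Nat.primeFactors_prod (fun q hq => hTprime q (hU hq))
  have hUdisj : ∀ U : Finset ℕ, U ⊆ T → Disjoint U S := fun U hU =>
    Finset.disjoint_of_subset_left hU Finset.sdiff_disjoint
  have hcop : ∀ U, U ⊆ T → Nat.Coprime p (U.prod id) := by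
    intro U hU
    refine Nat.Coprime.prod_right fun q hq => ?_
    exact (Nat.coprime_primes hpp (hTprime q (hU hq))).mpr (fun h => hpT (h ▸ hU hq))
  have hprodpos : ∀ U : Finset ℕ, U ⊆ T → U.prod id ≠ 0 :=
    fun U hU => Finset.prod_ne_zero_iff.mpr fun q hq => (hTprime q (hU hq)).pos.ne'
  have hpS' : ({p} : Finset ℕ) \ S = ∅ := by
    rw [Finset.sdiff_eq_empty_iff_subset]
    exact Finset.singleton_subset_iff.mpr hpS
  have hmyfb : ∀ b, b = 1 ∨ b = p → myf S b = 1 := by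
    intro b hb
    rcases hb with rfl | rfl
    · exact myf_one S
    · rw [myf, hpp.primeFactors, hpS']; simp
  have hcopb : ∀ U b, U ⊆ T → (b = 1 ∨ b = p) → Nat.Coprime b (U.prod id) := by
    intro U b hU hb
    rcases hb with rfl | rfl
    · exact Nat.coprime_one_left _
    · exact hcop U hU
  have hmyf : ∀ U b, (U, b) ∈ I → myf S (b * U.prod id) = 3 ^ U.card := by
    intro U b hx
    obtain ⟨hU, -, hb⟩ := hmem U b hx
    have hprod : myf S (U.prod id) = 3 ^ U.card := by
      rw [myf, hprodpf U hU, Finset.sdiff_eq_self_of_disjoint (hUdisj U hU)]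
    rw [myf_mul S _ _ (hcopb U b hU hb), hmyfb b hb, hprod, one_mul]
  have hdvd : ∀ U b, (U, b) ∈ I → b * U.prod id ∣ n := by
    intro U b hx
    obtain ⟨hU, -, hb⟩ := hmem U b hx
    have h1 : U.prod id ∣ n := by
      refine dvd_trans ?_ hdn
      refine Finset.prod_primes_dvd d (fun q hq => (hTprime q (hU hq)).prime) ?_
      intro q hq
      exact Nat.dvd_of_mem_primeFactors (Finset.mem_sdiff.mp (hU hq)).1
    have h2 : b ∣ n := by rcases hb with rfl | rfl; exacts [one_dvd n, hpn]
    exact Nat.Coprime.mul_dvd_of_dvd_of_dvd (hcopb U b hU hb) h2 h1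
  have hrec : ∀ U b, (U, b) ∈ I → (b * U.prod id).primeFactors \ S = U := by
    intro U b hx
    obtain ⟨hU, -, hb⟩ := hmem U b hx
    have hUS := Finset.sdiff_eq_self_of_disjoint (hUdisj U hU)
    rcases hb with rfl | rfl
    · rw [one_mul, hprodpf U hU, hUS]
    · rw [Nat.primeFactors_mul hpp.pos.ne' (hprodpos U hU), hpp.primeFactors,
        hprodpf U hU, Finset.union_sdiff_distrib, hpS', hUS, Finset.empty_union]
  have hinj : ∀ x ∈ I, ∀ y ∈ I, x.2 * x.1.prod id = y.2 * y.1.prod id → x = y := by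
    rintro ⟨U, b⟩ hx ⟨V, c⟩ hy hxy
    have h1 : U = V := by rw [← hrec U b hx, ← hrec V c hy, hxy]
    subst h1
    have hU := (hmem U b hx).1
    have hp0 : 0 < U.prod id := Nat.pos_of_ne_zero (hprodpos U hU)
    have h2 : b = c := Nat.eq_of_mul_eq_mul_right hp0 hxy
    rw [h2]
  have himage : I.image (fun x => x.2 * x.1.prod id) ⊆
      n.divisors.filter (fun e => myf S e < myf S d) := by
    intro e he
    obtain ⟨x, hx, rfl⟩ := Finset.mem_image.mp he
    obtain ⟨U, b⟩ := x
    obtain ⟨hU, hUne, -⟩ := hmem U b hx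
    refine Finset.mem_filter.mpr ⟨Nat.mem_divisors.mpr ⟨hdvd U b hx, hn⟩, ?_⟩
    have hcard : U.card < T.card := Finset.card_lt_card (hU.ssubset_of_ne hUne)
    have : myf S d = 3 ^ T.card := rfl
    rw [hmyf U b hx, this]
    exact Nat.pow_lt_pow_right (by norm_num) hcard
  have hsum1 : ∑ x ∈ I, myf S (x.2 * x.1.prod id)
      = ∑ e ∈ I.image (fun x => x.2 * x.1.prod id), myf S e :=
    (Finset.sum_image (fun x hx y hy h => hinj x hx y hy h)).symm
  have hsum2 : ∑ e ∈ I.image (fun x => x.2 * x.1.prod id), myf S e ≤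
      ∑ e ∈ n.divisors.filter (fun e => myf S e < myf S d), myf S e :=
    Finset.sum_le_sum_of_subset himage
  have hsum3 : ∑ x ∈ I, myf S (x.2 * x.1.prod id)
      = 2 * ∑ U ∈ T.powerset.erase T, 3 ^ U.card := by
    have : ∀ x ∈ I, myf S (x.2 * x.1.prod id) = 3 ^ x.1.card := by
      rintro ⟨U, b⟩ hx; exact hmyf U b hx
    rw [Finset.sum_congr rfl this, hI, Finset.sum_product, Finset.mul_sum]
    refine Finset.sum_congr rfl fun U hU => ?_
    rw [Finset.sum_pair hp1]
    show (3:ℕ) ^ U.card + 3 ^ U.card = 2 * 3 ^ U.card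
    ring
  have hps : 3 ^ T.card + ∑ U ∈ T.powerset.erase T, 3 ^ U.card = 4 ^ T.card := by
    rw [← sum_pow_powerset T]
    exact Finset.add_sum_erase _ (fun U => 3 ^ U.card) (Finset.mem_powerset_self T)
  have harith := arith T.card
  have hmyfd : myf S d = 3 ^ T.card := rfl
  omega


lemma myf_pos (S : Finset ℕ) (n : ℕ) : 0 < myf S n := Nat.pow_pos (by norm_num)

lemma myf_ge_three (S : Finset ℕ) {n e : ℕ} (hn : 0 < n) (he : e ∣ n) (he1 : e ≠ 1)
    (h : ∀ p ∈ S, ¬ p ∣ n) : 3 ≤ myf S e := by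
  obtain ⟨q, hq, hqe⟩ := Nat.exists_prime_and_dvd he1
  have he0 : e ≠ 0 := by
    rintro rfl
    exact hn.ne' (Nat.eq_zero_of_zero_dvd he)
  have hqm : q ∈ e.primeFactors := Nat.mem_primeFactors.mpr ⟨hq, hqe, he0⟩
  have hqS : q ∉ S := fun hqS => h q hqS (hqe.trans he)
  have hne : (e.primeFactors \ S).Nonempty := ⟨q, Finset.mem_sdiff.mpr ⟨hqm, hqS⟩⟩
  have h1 : 1 ≤ (e.primeFactors \ S).card := Finset.card_pos.mpr hne
  calc (3:ℕ) = 3 ^ 1 := (pow_one 3).symm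
    _ ≤ 3 ^ (e.primeFactors \ S).card := Nat.pow_le_pow_right (by norm_num) h1
    _ = myf S e := rfl

lemma fpractical_one (S : Finset ℕ) : FPractical (myf S) 1 := by
  refine ⟨one_pos, fun m hm hms => ?_⟩
  have h1 : Sf (myf S) 1 = 1 := by
    rw [Sf, Nat.divisors_one, Finset.sum_singleton, myf_one]
  have hm1 : m = 1 := by omega
  exact ⟨{1}, by simp [Nat.divisors_one], by simp [hm1, myf_one]⟩

lemma fpractical_of (S : Finset ℕ) (hS : ∀ p ∈ S, p.Prime) {n p : ℕ} (hn : 0 < n)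
    (hpS : p ∈ S) (hpn : p ∣ n) : FPractical (myf S) n := by
  classical
  set ord : ℕ → ℕ := fun e => (n + 1) * myf S e + e with hord
  have hcomp : ∀ d ∈ n.divisors,
      myf S d ≤ 1 + ∑ e ∈ n.divisors.filter (fun e => ord e < ord d), myf S e := by
    intro d hd
    obtain ⟨hdn, hn0⟩ := Nat.mem_divisors.mp hd
    have hkey := key S hS hn.ne' hdn hpS hpn
    have hsub : n.divisors.filter (fun e => myf S e < myf S d) ⊆
        n.divisors.filter (fun e => ord e < ord d) := by
      intro e he
      rw [Finset.mem_filter] at he ⊢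
      refine ⟨he.1, ?_⟩
      have hle : e ≤ n := Nat.divisor_le he.1
      have hmul : (n + 1) * (myf S e + 1) ≤ (n + 1) * myf S d :=
        Nat.mul_le_mul_left _ he.2
      have hexp : (n + 1) * (myf S e + 1) = (n + 1) * myf S e + (n + 1) := by ring
      rw [hord]
      simp only
      omega
    calc myf S d ≤ 1 + ∑ e ∈ n.divisors.filter (fun e => myf S e < myf S d), myf S e := hkey
      _ ≤ 1 + ∑ e ∈ n.divisors.filter (fun e => ord e < ord d), myf S e :=
          Nat.add_le_add_left (Finset.sum_le_sum_of_subset hsub) 1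
  refine ⟨hn, fun m _ hms => ?_⟩
  exact rep (myf S) ord n.divisors hcomp m hms

lemma not_fpractical (S : Finset ℕ) {n : ℕ} (hn : 1 < n)
    (h : ∀ p ∈ S, ¬ p ∣ n) : ¬ FPractical (myf S) n := by
  rintro ⟨hn0, hpr⟩
  have h2 : 2 ≤ Sf (myf S) n := by
    have hsub : ({1, n} : Finset ℕ) ⊆ n.divisors := by
      intro x hx
      rcases Finset.mem_insert.mp hx with rfl | hx
      · exact Nat.one_mem_divisors.mpr hn0.ne'
      · rw [Finset.mem_singleton.mp hx]
        exact Nat.mem_divisors_self n hn0.ne'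
    have hpair : ∑ e ∈ ({1, n} : Finset ℕ), myf S e ≤ Sf (myf S) n :=
      Finset.sum_le_sum_of_subset hsub
    rw [Finset.sum_pair hn.ne] at hpair
    have h3 := myf_ge_three S hn0 dvd_rfl hn.ne' h
    have := myf_one S
    omega
  obtain ⟨D, hD, hDs⟩ := hpr 2 (by norm_num) h2
  by_cases hex : ∃ d ∈ D, d ≠ 1
  · obtain ⟨d, hd, hd1⟩ := hex
    have hdn : d ∣ n := (Nat.mem_divisors.mp (hD hd)).1
    have h3 : 3 ≤ myf S d := myf_ge_three S hn0 hdn hd1 h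
    have hle : myf S d ≤ ∑ e ∈ D, myf S e :=
      Finset.single_le_sum (fun e _ => Nat.zero_le _) hd
    omega
  · push_neg at hex
    have hD1 : D ⊆ {1} := fun d hd => Finset.mem_singleton.mpr (hex d hd)
    rcases Finset.subset_singleton_iff.mp hD1 with rfl | rfl
    · simp at hDs
    · rw [Finset.sum_singleton, myf_one S] at hDs
      omega

lemma fpractical_iff (S : Finset ℕ) (hS : ∀ p ∈ S, p.Prime) (n : ℕ) :
    FPractical (myf S) n ↔ (0 < n ∧ (n = 1 ∨ ∃ p ∈ S, p ∣ n)) := by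
  constructor
  · intro hp
    refine ⟨hp.1, ?_⟩
    by_contra hcon
    push_neg at hcon
    obtain ⟨hn1, hnp⟩ := hcon
    have hn : 1 < n := lt_of_le_of_ne hp.1 (Ne.symm hn1)
    exact not_fpractical S hn hnp hp
  · rintro ⟨hn, rfl | ⟨p, hpS, hpn⟩⟩
    · exact fpractical_one S
    · exact fpractical_of S hS hn hpS hpn


variable (q : ℕ)

def cF (N : ℕ) : ℕ := ((Finset.range N).filter (fun m => q.Coprime m)).card

lemma cF_add (N : ℕ) : cF q (N + q) = cF q N + q.totient := by
  classical
  have hsplit : Finset.range (N + q) = Finset.range N ∪ Finset.Ico N (N + q) := by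
    rw [Finset.range_eq_Ico, Finset.range_eq_Ico, Finset.Ico_union_Ico_eq_Ico (Nat.zero_le N) (Nat.le_add_right N q)]
  have hdisj : Disjoint (Finset.range N) (Finset.Ico N (N + q)) := by
    rw [Finset.range_eq_Ico]
    exact Finset.Ico_disjoint_Ico_consecutive 0 N (N + q)
  rw [cF, hsplit, Finset.filter_union,
    Finset.card_union_of_disjoint (Finset.disjoint_filter_filter hdisj)]
  congr 1
  exact Nat.filter_coprime_Ico_eq_totient q N

lemma cF_mul (k : ℕ) : cF q (k * q) = k * q.totient := by
  induction k with
  | zero => simp [cF]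
  | succ k ih => rw [Nat.succ_mul, cF_add, ih, Nat.succ_mul]

lemma cF_mono : Monotone (cF q) := fun a b hab =>
  Finset.card_le_card (Finset.filter_subset_filter _ (Finset.range_subset_range.mpr hab))

lemma cF_lb (N : ℕ) : (N / q) * q.totient ≤ cF q N := by
  rw [← cF_mul q (N / q)]
  exact cF_mono q (Nat.div_mul_le_self N q)

lemma cF_ub (hq : 0 < q) (N : ℕ) : cF q N ≤ (N / q) * q.totient + q.totient := by
  have h1 : N ≤ (N / q) * q + q := by
    have h := Nat.div_add_mod N q
    have h2 := Nat.mod_lt N hq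
    have h3 : (N / q) * q = q * (N / q) := Nat.mul_comm _ _
    omega
  calc cF q N ≤ cF q ((N / q) * q + q) := cF_mono q h1
    _ = (N / q) * q.totient + q.totient := by rw [cF_add, cF_mul]



def c1 (q N : ℕ) : ℕ := ((Finset.Icc 1 N).filter (fun m => q.Coprime m)).card

lemma c1_le (q N : ℕ) : c1 q N ≤ cF q (N + 1) := by
  refine Finset.card_le_card (Finset.filter_subset_filter _ ?_)
  intro m hm
  rw [Finset.mem_Icc] at hm
  exact Finset.mem_range.mpr (by omega)

lemma cF_le (q N : ℕ) : cF q (N + 1) ≤ c1 q N + 1 := by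
  have h1 : (Finset.range (N+1)).filter (fun m => q.Coprime m) ⊆
      insert 0 ((Finset.Icc 1 N).filter (fun m => q.Coprime m)) := by
    intro m hm
    rw [Finset.mem_filter, Finset.mem_range] at hm
    rcases Nat.eq_zero_or_pos m with rfl | hm0
    · exact Finset.mem_insert_self 0 _
    · exact Finset.mem_insert_of_mem
        (Finset.mem_filter.mpr ⟨Finset.mem_Icc.mpr ⟨hm0, by omega⟩, hm.2⟩)
  calc cF q (N+1) ≤ (insert 0 ((Finset.Icc 1 N).filter (fun m => q.Coprime m))).card :=
        Finset.card_le_card h1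
    _ ≤ c1 q N + 1 := Finset.card_insert_le _ _

lemma c1_le_self (q N : ℕ) : c1 q N ≤ N := by
  calc c1 q N ≤ (Finset.Icc 1 N).card := Finset.card_filter_le _ _
    _ = N := by rw [Nat.card_Icc]; omega

lemma c1_bound1 (q : ℕ) (hq : 0 < q) (N : ℕ) :
    q * c1 q N ≤ q.totient * N + q.totient + q * q.totient := by
  set k := (N+1)/q with hk
  have hA : cF q (N+1) ≤ k * q.totient + q.totient := cF_ub q hq (N+1)
  have hC : q * k ≤ N + 1 := by
    rw [hk, Nat.mul_comm]; exact Nat.div_mul_le_self (N+1) q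
  calc q * c1 q N ≤ q * (k * q.totient + q.totient) :=
        Nat.mul_le_mul_left q ((c1_le q N).trans hA)
    _ = (q * k) * q.totient + q * q.totient := by ring
    _ ≤ (N + 1) * q.totient + q * q.totient := by
        exact Nat.add_le_add_right (Nat.mul_le_mul_right _ hC) _
    _ = q.totient * N + q.totient + q * q.totient := by ring

lemma c1_bound2 (q : ℕ) (hq : 0 < q) (N : ℕ) :
    q.totient * N ≤ q * c1 q N + q + q * q.totient := by
  set k := (N+1)/q with hk
  have hB : k * q.totient ≤ cF q (N+1) := cF_lb q (N+1)
  have hD : N + 1 < q * k + q := by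
    rw [hk]
    have h := Nat.div_add_mod (N+1) q
    have h2 := Nat.mod_lt (N+1) hq
    omega
  calc q.totient * N ≤ q.totient * (q * k + q) := Nat.mul_le_mul_left _ (by omega)
    _ = q * (k * q.totient) + q * q.totient := by ring
    _ ≤ q * (c1 q N + 1) + q * q.totient :=
        Nat.add_le_add_right (Nat.mul_le_mul_left q (hB.trans (cF_le q N))) _
    _ = q * c1 q N + q + q * q.totient := by ring

lemma c1_tendsto (q : ℕ) (hq : 0 < q) :
    Filter.Tendsto (fun N : ℕ => (c1 q N : ℝ) / N) Filter.atTop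
      (nhds ((q.totient : ℝ) / q)) := by
  have hq' : (0:ℝ) < q := by exact_mod_cast hq
  set C : ℝ := q.totient + q + q * q.totient with hC
  have hCnn : 0 ≤ C := by positivity
  have hsq : Filter.Tendsto (fun N : ℕ => (c1 q N : ℝ) / N - q.totient / q)
      Filter.atTop (nhds 0) := by
    apply squeeze_zero_norm' (a := fun N : ℕ => C / N)
    · filter_upwards [Filter.eventually_ge_atTop 1] with N hN
      have hN' : (0:ℝ) < N := by exact_mod_cast hN
      have h1 : (q:ℝ) * c1 q N ≤ q.totient * N + q.totient + q * q.totient := by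
        exact_mod_cast c1_bound1 q hq N
      have h2 : (q.totient:ℝ) * N ≤ q * c1 q N + q + q * q.totient := by
        exact_mod_cast c1_bound2 q hq N
      have heq : (c1 q N : ℝ) / N - q.totient / q =
          ((q:ℝ) * c1 q N - q.totient * N) / (q * N) := by
        field_simp
      have hqN : (0:ℝ) < (q:ℝ) * N := by positivity
      rw [heq, Real.norm_eq_abs, abs_div, abs_of_pos hqN]
      rw [div_le_div_iff₀ hqN hN']
      have habs : |(q:ℝ) * c1 q N - q.totient * N| ≤ C := by
        rw [abs_le]
        constructor <;> [skip; skip] <;> rw [hC] <;> nlinarith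
      calc |(q:ℝ) * c1 q N - q.totient * N| * N ≤ C * N :=
            mul_le_mul_of_nonneg_right habs hN'.le
        _ ≤ C * (q * N) := by
            refine mul_le_mul_of_nonneg_left ?_ hCnn
            have hq1 : (1:ℝ) ≤ q := by exact_mod_cast hq
            nlinarith
    · exact tendsto_const_div_atTop_nhds_zero_nat C
  have := hsq.add tendsto_const_nhds (b := (q.totient : ℝ)/q)
  simpa using this


noncomputable def gP (a n : ℕ) : ℝ :=
  ∏ p ∈ (Finset.range n).filter (fun p => p.Prime ∧ a ≤ p), (1 - 1/(p:ℝ))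

lemma gP_factor_nonneg {p : ℕ} (hp : p.Prime) : (0:ℝ) ≤ 1 - 1/(p:ℝ) := by
  have h2 : (2:ℝ) ≤ p := by exact_mod_cast hp.two_le
  have : 1/(p:ℝ) ≤ 1/2 := by
    apply one_div_le_one_div_of_le <;> linarith
  linarith

lemma gP_nonneg (a n : ℕ) : 0 ≤ gP a n := by
  refine Finset.prod_nonneg fun p hp => ?_
  exact gP_factor_nonneg (Finset.mem_filter.mp hp).2.1

lemma gP_zero (a : ℕ) : gP a 0 = 1 := by simp [gP]

lemma gP_succ_ge (a n : ℕ) (ha : 1 ≤ a) : gP a n * (1 - 1/(a:ℝ)) ≤ gP a (n + 1) := by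
  have ha' : (0:ℝ) < a := by exact_mod_cast ha
  have hfac : (0:ℝ) ≤ 1 - 1/(a:ℝ) := by
    have : 1/(a:ℝ) ≤ 1 := by
      rw [div_le_one ha']; exact_mod_cast ha
    linarith
  by_cases hn : n.Prime ∧ a ≤ n
  · have hstep : (Finset.range (n+1)).filter (fun p => p.Prime ∧ a ≤ p)
        = insert n ((Finset.range n).filter (fun p => p.Prime ∧ a ≤ p)) := by
      rw [Finset.range_add_one, Finset.filter_insert, if_pos hn]
    have hnmem : n ∉ (Finset.range n).filter (fun p => p.Prime ∧ a ≤ p) := by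
      simp
    simp only [gP]
    rw [hstep, Finset.prod_insert hnmem]
    have hle : 1 - 1/(a:ℝ) ≤ 1 - 1/(n:ℝ) := by
      have han : (a:ℝ) ≤ n := by exact_mod_cast hn.2
      have hn0 : (0:ℝ) < n := lt_of_lt_of_le ha' han
      have := one_div_le_one_div_of_le ha' han
      linarith
    calc gP a n * (1 - 1/(a:ℝ)) ≤ gP a n * (1 - 1/(n:ℝ)) :=
          mul_le_mul_of_nonneg_left hle (gP_nonneg a n)
      _ = (1 - 1/(n:ℝ)) * gP a n := mul_comm _ _
      _ = (1 - 1/(n:ℝ)) * ∏ p ∈ (Finset.range n).filter (fun p => p.Prime ∧ a ≤ p), (1 - 1/(p:ℝ)) := rfl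
  · have hstep : (Finset.range (n+1)).filter (fun p => p.Prime ∧ a ≤ p)
        = (Finset.range n).filter (fun p => p.Prime ∧ a ≤ p) := by
      rw [Finset.range_add_one, Finset.filter_insert, if_neg hn]
    simp only [gP]
    rw [hstep]
    calc gP a n * (1 - 1/(a:ℝ)) ≤ gP a n * 1 := by
          refine mul_le_mul_of_nonneg_left ?_ (gP_nonneg a n)
          have : 0 < 1/(a:ℝ) := by positivity
          linarith
      _ = gP a n := mul_one _
      _ = _ := rfl

lemma sum_primes_tendsto (a : ℕ) :
    Filter.Tendsto
      (fun n : ℕ => ∑ p ∈ (Finset.range n).filter (fun p => p.Prime ∧ a ≤ p), 1/(p:ℝ))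
      Filter.atTop Filter.atTop := by
  set T : Set ℕ := {p | p.Prime ∧ a ≤ p} with hT
  have hns : ¬ Summable (T.indicator fun n : ℕ => 1/(n:ℝ)) := by
    intro h
    apply not_summable_one_div_on_primes
    have hsmall : Summable (({p | p.Prime ∧ p < a} : Set ℕ).indicator fun n : ℕ => 1/(n:ℝ)) := by
      apply summable_of_ne_finset_zero (s := Finset.range a)
      intro n hn
      rw [Finset.mem_range, not_lt] at hn
      apply Set.indicator_of_notMem
      rintro ⟨-, hlt⟩
      omega
    have heq : ({p | p.Prime} : Set ℕ).indicator (fun n : ℕ => 1/(n:ℝ))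
        = (T.indicator fun n : ℕ => 1/(n:ℝ))
          + (({p | p.Prime ∧ p < a} : Set ℕ).indicator fun n : ℕ => 1/(n:ℝ)) := by
      funext x
      simp only [Pi.add_apply, Set.indicator_apply, hT, Set.mem_setOf_eq]
      by_cases hx : x.Prime
      · by_cases hax : a ≤ x
        · rw [if_pos hx, if_pos ⟨hx, hax⟩, if_neg (by omega), add_zero]
        · rw [if_pos hx, if_neg (by tauto), if_pos ⟨hx, by omega⟩, zero_add]
      · rw [if_neg hx, if_neg (by tauto), if_neg (by tauto), add_zero]
    rw [heq]
    exact h.add hsmall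
  have hnonneg : ∀ i : ℕ, 0 ≤ T.indicator (fun n : ℕ => 1/(n:ℝ)) i := by
    intro i
    apply Set.indicator_nonneg
    intro x _
    positivity
  have := (not_summable_iff_tendsto_nat_atTop_of_nonneg hnonneg).mp hns
  refine this.congr fun n => ?_
  rw [Finset.sum_indicator_eq_sum_filter]
  rfl

lemma gP_tendsto_zero (a : ℕ) : Filter.Tendsto (gP a) Filter.atTop (nhds 0) := by
  have hub : ∀ n, gP a n ≤ Real.exp
      (-(∑ p ∈ (Finset.range n).filter (fun p => p.Prime ∧ a ≤ p), 1/(p:ℝ))) := by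
    intro n
    calc gP a n ≤ ∏ p ∈ (Finset.range n).filter (fun p => p.Prime ∧ a ≤ p),
          Real.exp (-(1/(p:ℝ))) := by
          refine Finset.prod_le_prod (fun p hp => gP_factor_nonneg (Finset.mem_filter.mp hp).2.1)
            (fun p hp => ?_)
          have := Real.add_one_le_exp (-(1/(p:ℝ)))
          linarith
      _ = Real.exp (∑ p ∈ (Finset.range n).filter (fun p => p.Prime ∧ a ≤ p), -(1/(p:ℝ))) :=
          (Real.exp_sum _ _).symm
      _ = _ := by rw [← Finset.sum_neg_distrib]
  have hexp : Filter.Tendsto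
      (fun n : ℕ => Real.exp
        (-(∑ p ∈ (Finset.range n).filter (fun p => p.Prime ∧ a ≤ p), 1/(p:ℝ))))
      Filter.atTop (nhds 0) :=
    Real.tendsto_exp_atBot.comp (Filter.tendsto_neg_atTop_atBot.comp (sum_primes_tendsto a))
  exact squeeze_zero' (Filter.Eventually.of_forall (gP_nonneg a))
    (Filter.Eventually.of_forall hub) hexp

lemma exists_primes_prod (β ε : ℝ) (hβ0 : 0 ≤ β) (hβ1 : β ≤ 1) (hε : 0 < ε) :
    ∃ S : Finset ℕ, (∀ p ∈ S, p.Prime) ∧ |(∏ p ∈ S, (1 - 1/(p:ℝ))) - β| < ε := by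
  obtain ⟨a, ha⟩ := exists_nat_gt ((1+ε)/ε)
  have hεpos : (0:ℝ) < ε := hε
  have hfrac : (1:ℝ) < (1+ε)/ε := by
    rw [lt_div_iff₀ hε]; linarith
  have ha1 : 1 ≤ a := by
    by_contra h
    push_neg at h
    interval_cases a
    · simp at ha; linarith
  have ha0 : (0:ℝ) < a := by
    have : (1:ℝ) ≤ a := by exact_mod_cast ha1
    linarith
  have hinv : (1+ε) * (1/(a:ℝ)) < ε := by
    rw [div_lt_iff₀ hε] at ha
    rw [mul_one_div, div_lt_iff₀ ha0]
    linarith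
  have hex : ∃ n, gP a n < β + ε := by
    have := (gP_tendsto_zero a).eventually_lt_const (by linarith : (0:ℝ) < β + ε)
    exact this.exists
  set n := Nat.find hex with hn
  have hlt : gP a n < β + ε := Nat.find_spec hex
  have hgt : β - ε < gP a n := by
    rcases Nat.eq_zero_or_pos n with h0 | hpos
    · rw [h0, gP_zero]; linarith
    · have hprev : ¬ gP a (n-1) < β + ε := Nat.find_min hex (by omega)
      push_neg at hprev
      have hstep : gP a (n-1) * (1 - 1/(a:ℝ)) ≤ gP a n := by
        have := gP_succ_ge a (n-1) ha1
        rwa [Nat.sub_add_cancel hpos] at this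
      have hfacnn : (0:ℝ) ≤ 1 - 1/(a:ℝ) := by
        have h1a : 1/(a:ℝ) ≤ 1 := by
          rw [div_le_one ha0]; exact_mod_cast ha1
        linarith
      have h2 : (β + ε) * (1 - 1/(a:ℝ)) ≤ gP a (n-1) * (1 - 1/(a:ℝ)) :=
        mul_le_mul_of_nonneg_right hprev hfacnn
      have h3 : (β + ε) * (1 - 1/(a:ℝ)) = (β + ε) - (β + ε) * (1/(a:ℝ)) := by ring
      have h4 : (β + ε) * (1/(a:ℝ)) ≤ (1 + ε) * (1/(a:ℝ)) := by
        refine mul_le_mul_of_nonneg_right (by linarith) (by positivity)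
      linarith
  exact ⟨(Finset.range n).filter (fun p => p.Prime ∧ a ≤ p),
    fun p hp => (Finset.mem_filter.mp hp).2.1,
    by
      have hpe : (∏ p ∈ (Finset.range n).filter (fun p => p.Prime ∧ a ≤ p), (1 - 1/(p:ℝ)))
          = gP a n := rfl
      rw [hpe, abs_lt]
      constructor <;> linarith⟩


lemma totient_div_eq_prod (S : Finset ℕ) (hS : ∀ p ∈ S, p.Prime) :
    (((∏ p ∈ S, p : ℕ).totient : ℝ)) / ((∏ p ∈ S, p : ℕ) : ℝ) = ∏ p ∈ S, (1 - 1/(p:ℝ)) := by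
  set q := ∏ p ∈ S, p with hq
  have hq0 : q ≠ 0 := Finset.prod_ne_zero_iff.mpr fun p hp => (hS p hp).pos.ne'
  have hq0' : ((q:ℝ)) ≠ 0 := Nat.cast_ne_zero.mpr hq0
  have hQ : (q.totient : ℚ) = q * ∏ p ∈ q.primeFactors, (1 - (p:ℚ)⁻¹) :=
    Nat.totient_eq_mul_prod_factors q
  have hpf : q.primeFactors = S := Nat.primeFactors_prod hS
  rw [hpf] at hQ
  have hR : (q.totient : ℝ) = q * ∏ p ∈ S, (1 - (p:ℝ)⁻¹) := by
    have := congrArg (fun x : ℚ => (x : ℝ)) hQ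
    push_cast at this
    exact_mod_cast this
  rw [hR, mul_div_cancel_left₀ _ hq0']
  exact Finset.prod_congr rfl fun p _ => by rw [one_div]

lemma pcount (S : Finset ℕ) (hS : ∀ p ∈ S, p.Prime) (N : ℕ) (hN : 1 ≤ N) :
    ((Finset.Icc 1 N).filter (fun m => FPractical (myf S) m)).card
      = (N - c1 (∏ p ∈ S, p) N) + 1 := by
  set q := ∏ p ∈ S, p with hq
  have hcop : ∀ m : ℕ, (¬ q.Coprime m) ↔ ∃ p ∈ S, p ∣ m := by
    intro m
    have h1 : q.Coprime m ↔ ∀ p ∈ S, ¬ p ∣ m := by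
      rw [hq, Nat.coprime_prod_left_iff]
      exact forall₂_congr (fun p hp => (hS p hp).coprime_iff_not_dvd)
    rw [h1]
    push_neg
    rfl
  have hfc : (Finset.Icc 1 N).filter (fun m => FPractical (myf S) m)
      = (Finset.Icc 1 N).filter (fun m => m = 1 ∨ ¬ q.Coprime m) := by
    refine Finset.filter_congr fun m hm => ?_
    rw [Finset.mem_Icc] at hm
    rw [fpractical_iff S hS m, hcop m]
    constructor
    · rintro ⟨-, h⟩; exact h
    · intro h; exact ⟨by omega, h⟩
  rw [hfc, Finset.filter_or]
  have hfeq : (Finset.Icc 1 N).filter (fun m => m = 1) = {1} := by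
    rw [Finset.filter_eq']
    rw [if_pos (Finset.mem_Icc.mpr ⟨le_refl 1, hN⟩)]
  rw [hfeq]
  have hdisj : Disjoint ({1} : Finset ℕ) ((Finset.Icc 1 N).filter (fun m => ¬ q.Coprime m)) := by
    rw [Finset.disjoint_singleton_left]
    intro h
    exact (Finset.mem_filter.mp h).2 (Nat.coprime_one_right q)
  rw [Finset.card_union_of_disjoint hdisj, Finset.card_singleton]
  have hsplit := Finset.card_filter_add_card_filter_not
    (s := Finset.Icc 1 N) (p := fun m => q.Coprime m)
  have hcard : (Finset.Icc 1 N).card = N := by rw [Nat.card_Icc]; omega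
  have hc1 : c1 q N = ((Finset.Icc 1 N).filter (fun m => q.Coprime m)).card := rfl
  omega

lemma density (S : Finset ℕ) (hS : ∀ p ∈ S, p.Prime) :
    Filter.Tendsto
      (fun N : ℕ => (((Finset.Icc 1 N).filter (fun m => FPractical (myf S) m)).card : ℝ) / N)
      Filter.atTop (nhds (1 - ((∏ p ∈ S, p : ℕ).totient : ℝ) / ((∏ p ∈ S, p : ℕ) : ℝ))) := by
  set q := ∏ p ∈ S, p with hq
  have hq0 : 0 < q := Finset.prod_pos fun p hp => (hS p hp).pos
  have h1 : Filter.Tendsto (fun N : ℕ => 1 - (c1 q N : ℝ)/N + 1/N) Filter.atTop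
      (nhds (1 - (q.totient : ℝ)/q + 0)) :=
    (tendsto_const_nhds.sub (c1_tendsto q hq0)).add tendsto_one_div_atTop_nhds_zero_nat
  rw [add_zero] at h1
  refine h1.congr' ?_
  filter_upwards [Filter.eventually_ge_atTop 1] with N hN
  have hle := c1_le_self q N
  rw [pcount S hS N hN]
  have hcast : (((N - c1 q N) + 1 : ℕ) : ℝ) = (N : ℝ) - c1 q N + 1 := by
    push_cast [Nat.cast_sub hle]
    ring
  rw [hcast]
  have hN0 : ((N:ℝ)) ≠ 0 := by
    have : (1:ℝ) ≤ N := by exact_mod_cast hN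
    linarith
  field_simp

end Stmt10Aux

open Stmt10Aux in
/-- The densities of the f-practical sets are dense in [0,1]. -/
theorem stmt10 (α : ℝ) (hα : α ∈ Set.Icc (0 : ℝ) 1) (ε : ℝ) (hε : 0 < ε) :
    ∃ f : ℕ → ℕ, f 1 = 1 ∧
      (∀ a b : ℕ, Nat.Coprime a b → f (a * b) = f a * f b) ∧
      (∀ p k : ℕ, p.Prime → 1 ≤ k → f (p ^ (k - 1)) ≤ f (p ^ k)) ∧
      ∃ δ : ℝ,
        Filter.Tendsto
          (fun N : ℕ => (((Finset.Icc 1 N).filter fun m => FPractical f m).card : ℝ) / N)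
          Filter.atTop (nhds δ) ∧ |δ - α| < ε := by
  obtain ⟨hα0, hα1⟩ := hα
  obtain ⟨S, hS, hprod⟩ := exists_primes_prod (1 - α) ε (by linarith) (by linarith) hε
  refine ⟨myf S, myf_one S, myf_mul S, fun p k hp hk => myf_pow S p k hp hk,
    1 - ((∏ p ∈ S, p : ℕ).totient : ℝ) / ((∏ p ∈ S, p : ℕ) : ℝ), density S hS, ?_⟩
  rw [totient_div_eq_prod S hS]
  have : (1 - (∏ p ∈ S, (1 - 1/(p:ℝ)))) - α = -((∏ p ∈ S, (1 - 1/(p:ℝ))) - (1 - α)) := by ring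
  rw [this, abs_neg]
  exact hprod
end

section
/- Every even weakly φ*-practical number is practical. That is, if n is an even positive integer that is weakly φ*-practical, then every positive integer m ≤ σ(n) can be written as a sum of distinct divisors of n. -/
open Finset

def Pr (m : ℕ) : Prop := ∀ t : ℕ, t ≤ ∑ d ∈ m.divisors, d →
  ∃ D : Finset ℕ, D ⊆ m.divisors ∧ t = ∑ d ∈ D, d

lemma Pr_one : Pr 1 := by
  intro t ht
  simp only [Nat.divisors_one, Finset.sum_singleton] at ht
  interval_cases t
  · exact ⟨∅, by simp⟩
  · exact ⟨{1}, by simp⟩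

lemma geom (p : ℕ) (hp : 1 ≤ p) : ∀ i, (p - 1) * (∑ j ∈ range i, p ^ j) + 1 = p ^ i := by
  intro i
  induction i with
  | zero => simp
  | succ i ih =>
    rw [Finset.sum_range_succ, Nat.mul_add]
    have h3 : (p - 1) * p ^ i + p ^ i = p ^ (i + 1) := by
      have : (p - 1) * p ^ i + p ^ i = ((p-1)+1) * p ^ i := by ring
      rw [this, Nat.sub_add_cancel hp, pow_succ, Nat.mul_comm]
    omega

lemma sigma_pow (p : ℕ) (hp : p.Prime) (i : ℕ) :
    ∑ d ∈ (p ^ i).divisors, d = ∑ j ∈ range (i + 1), p ^ j := by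
  rw [← ArithmeticFunction.sigma_one_apply, ArithmeticFunction.sigma_one_apply_prime_pow hp]

lemma rep (S q : ℕ) (hq2 : q ≤ S + 1) :
    ∀ a t, t ≤ S + a * q → ∃ b r, b ≤ a ∧ r ≤ S ∧ t = b * q + r := by
  intro a
  induction a with
  | zero => intro t ht; exact ⟨0, t, le_rfl, by simpa using ht, by simp⟩
  | succ a ih =>
    intro t ht
    rcases le_or_gt t (S + a * q) with h | h
    · obtain ⟨b, r, hb, hr, htr⟩ := ih t h
      exact ⟨b, r, hb.trans (Nat.le_succ a), hr, htr⟩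
    · have hsq : (a + 1) * q = a * q + q := by ring
      have hqt : q ≤ t := by omega
      obtain ⟨b, r, hb, hr, htr⟩ := ih (t - q) (by omega)
      refine ⟨b + 1, r, by omega, hr, ?_⟩
      have : (b + 1) * q = b * q + q := by ring
      omega

lemma step (m p : ℕ) (hm : 0 < m) (hp : p.Prime) (hpm : ¬ p ∣ m)
    (hple : p ≤ (∑ d ∈ m.divisors, d) + 1) (hPr : Pr m) :
    ∀ e : ℕ, Pr (m * p ^ e) := by
  intro e
  induction e with
  | zero => simpa using hPr
  | succ e ih =>
    intro t ht
    set σm := ∑ d ∈ m.divisors, d with hσm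
    set G := ∑ j ∈ range (e + 1), p ^ j with hG
    set q := p ^ (e + 1) with hqdef
    have hcop : m.Coprime (p ^ (e + 1)) := ((hp.coprime_iff_not_dvd.mpr hpm).symm.pow_right _)
    have hSe : ∑ d ∈ (m * p ^ e).divisors, d = σm * G := by
      rw [Nat.Coprime.sum_divisors_mul ((hp.coprime_iff_not_dvd.mpr hpm).symm.pow_right _),
        sigma_pow p hp]
    have hq : 0 < q := pow_pos hp.pos _
    have hg : (p - 1) * G + 1 = q := geom p hp.one_lt.le (e + 1)
    have hple' : (p - 1) * G ≤ σm * G := Nat.mul_le_mul_right _ (by omega)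
    have hq2 : q ≤ σm * G + 1 := by omega
    have ht' : t ≤ σm * G + σm * q := by
      have hS : ∑ d ∈ (m * p ^ (e + 1)).divisors, d = σm * G + σm * q := by
        rw [Nat.Coprime.sum_divisors_mul hcop, sigma_pow p hp, Finset.sum_range_succ,
          Nat.mul_add]
      rw [hS] at ht; exact ht
    obtain ⟨a, r, ha, hr, htr⟩ := rep (σm * G) q hq2 σm t (by omega)
    rw [← hSe] at hr
    obtain ⟨D', hD'sub, hD'sum⟩ := ih r hr
    obtain ⟨D, hDsub, hDsum⟩ := hPr a ha
    refine ⟨D' ∪ D.image (· * q), ?_, ?_⟩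
    · intro x hx
      rcases Finset.mem_union.mp hx with hx | hx
      · have := Nat.mem_divisors.mp (hD'sub hx)
        exact Nat.mem_divisors.mpr ⟨this.1.trans (mul_dvd_mul_left m ⟨p, by rw [hqdef, pow_succ]⟩),
          by positivity⟩
      · obtain ⟨d, hd, rfl⟩ := Finset.mem_image.mp hx
        have := Nat.mem_divisors.mp (hDsub hd)
        exact Nat.mem_divisors.mpr ⟨mul_dvd_mul this.1 dvd_rfl, by positivity⟩
    · have hdisj : Disjoint D' (D.image (· * q)) := by
        rw [Finset.disjoint_right]
        intro x hx hx'
        obtain ⟨d, hd, rfl⟩ := Finset.mem_image.mp hx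
        have hd0 : d ≠ 0 := Nat.pos_of_mem_divisors (hDsub hd) |>.ne'
        have hdvd : d * q ∣ m * p ^ e := (Nat.mem_divisors.mp (hD'sub hx')).1
        have hqdvd : q ∣ m * p ^ e := (dvd_mul_left q d).trans hdvd
        have h1 : p * p ^ e ∣ m * p ^ e := by
          rwa [hqdef, pow_succ, mul_comm (p ^ e) p] at hqdvd
        have : p ∣ m := (mul_dvd_mul_iff_right (pow_pos hp.pos e).ne').mp h1
        exact hpm this
      rw [Finset.sum_union hdisj, ← hD'sum]
      have himg : ∑ d ∈ D.image (· * q), d = a * q := by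
        rw [Finset.sum_image (fun x _ y _ h => Nat.eq_of_mul_eq_mul_right hq h), ← Finset.sum_mul,
          ← hDsum]
      rw [himg]
      omega


/-- The unitary totient function: φ*(n) = ∏_{p^k ∥ n} (p^k - 1). -/
def phiStar (m : ℕ) : ℕ := ∏ p ∈ m.primeFactors, (p ^ m.factorization p - 1)

lemma phiStar_le (d : ℕ) (hd : 0 < d) : phiStar d ≤ d := by
  calc phiStar d ≤ ∏ p ∈ d.primeFactors, p ^ d.factorization p :=
    Finset.prod_le_prod' (fun p _ => Nat.sub_le _ _)
  _ = d := by
    conv_rhs => rw [← Nat.factorization_prod_pow_eq_self hd.ne']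
    rw [Finsupp.prod]
    rfl

lemma phiStar_prime (p : ℕ) (hp : p.Prime) : phiStar p = p - 1 := by
  simp [phiStar, hp.primeFactors, hp.factorization_self]

lemma phiStar_two : phiStar 2 = 1 := by rw [phiStar_prime 2 Nat.prime_two]

lemma Sf_le (m : ℕ) (hm : 0 < m) (h2 : 2 ∣ m) : Sf phiStar m + 1 ≤ ∑ d ∈ m.divisors, d := by
  have h2m : 2 ∈ m.divisors := Nat.mem_divisors.mpr ⟨h2, hm.ne'⟩
  have hle : ∑ d ∈ m.divisors.erase 2, phiStar d ≤ ∑ d ∈ m.divisors.erase 2, d :=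
    Finset.sum_le_sum fun d hd =>
      phiStar_le d (Nat.pos_of_mem_divisors (Finset.mem_of_mem_erase hd))
  have e1 : phiStar 2 + ∑ d ∈ m.divisors.erase 2, phiStar d = Sf phiStar m :=
    Finset.add_sum_erase _ _ h2m
  have e2 : 2 + ∑ d ∈ m.divisors.erase 2, d = ∑ d ∈ m.divisors, d :=
    Finset.add_sum_erase _ (fun d => d) h2m
  rw [phiStar_two] at e1
  omega


/-- Every even weakly φ*-practical number is practical: every positive integer
m ≤ σ(n) is a sum of distinct divisors of n. -/
theorem stmt11 (n : ℕ) (heven : 2 ∣ n) (hweak : WeaklyFPractical phiStar n) :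
    ∀ m : ℕ, 0 < m → m ≤ ∑ d ∈ n.divisors, d →
      ∃ D : Finset ℕ, D ⊆ n.divisors ∧ m = ∑ d ∈ D, d := by
  obtain ⟨hn, l, hnd, htf, hsort, hcond⟩ := hweak
  have hn0 : n ≠ 0 := hn.ne'
  have h2pf : 2 ∈ n.primeFactors := Nat.mem_primeFactors.mpr ⟨Nat.prime_two, heven, hn0⟩
  have h2l : 2 ∈ l := by rw [← List.mem_toFinset, htf]; exact h2pf
  have hlen : 0 < l.length := List.length_pos_iff.mpr (by rintro rfl; simp at h2l)
  have hprime : ∀ x ∈ l, x.Prime := fun x hx =>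
    Nat.prime_of_mem_primeFactors (htf ▸ List.mem_toFinset.mpr hx)
  have hhead : l.get ⟨0, hlen⟩ = 2 := by
    obtain ⟨j, hj⟩ := List.mem_iff_get.mp h2l
    rcases Nat.eq_zero_or_pos j.1 with h0 | h0
    · rw [← hj]; congr 1; exact Fin.ext h0.symm
    · have hrel : phiStar (l.get ⟨0, hlen⟩) ≤ phiStar (l.get j) :=
        List.Pairwise.rel_get_of_lt hsort (by exact h0)
      have hp0 : (l.get ⟨0, hlen⟩).Prime := hprime _ (l.get_mem _)
      rw [hj, phiStar_two, phiStar_prime _ hp0] at hrel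
      have := hp0.two_le
      omega
  have key : ∀ i, i ≤ l.length →
      Pr (((l.take i).map fun p => p ^ n.factorization p).prod) := by
    intro i
    induction i with
    | zero => intro _; simpa using Pr_one
    | succ i ih =>
      intro hi1
      have hi : i < l.length := hi1
      set p := l.get ⟨i, hi⟩ with hpdef
      set m := ((l.take i).map fun p => p ^ n.factorization p).prod with hmdef
      have hmPr : Pr m := ih hi.le
      have hp : p.Prime := hprime _ (l.get_mem _)
      have hprod : ((l.take (i+1)).map fun p => p ^ n.factorization p).prod
          = m * p ^ n.factorization p := by
        rw [List.map_take, List.prod_take_succ _ i (by simpa using hi)]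
        rw [hmdef, List.map_take]
        congr 1
        rw [List.getElem_map]
        rfl
      have hm0 : 0 < m := by
        rw [hmdef]
        apply List.prod_pos
        intro x hx
        obtain ⟨y, hy, rfl⟩ := List.mem_map.mp hx
        exact pow_pos (hprime y (List.take_subset _ _ hy)).pos _
      have hpm : ¬ p ∣ m := by
        intro hdvd
        rw [hmdef] at hdvd
        obtain ⟨x, hxmem, hpx⟩ := (hp.prime.dvd_prod_iff).mp hdvd
        obtain ⟨y, hymem, rfl⟩ := List.mem_map.mp hxmem
        have hy : y ∈ l := List.take_subset _ _ hymem
        have hpy : p = y := (Nat.prime_dvd_prime_iff_eq hp (hprime y hy)).mp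
          (hp.dvd_of_dvd_pow hpx)
        obtain ⟨j, hji, hjy⟩ := List.mem_take_iff_getElem.mp hymem
        have hj2 : j < l.length := lt_of_lt_of_le hji (min_le_right _ _)
        have hji' : j < i := lt_of_lt_of_le hji (min_le_left _ _)
        have heq : (⟨j, hj2⟩ : Fin l.length) = ⟨i, hi⟩ := hnd.get_inj_iff.mp (by
          show l[j] = l[i]
          rw [hjy, ← hpy]
          rfl)
        have : j = i := congrArg Fin.val heq
        omega
      have hple : p ≤ (∑ d ∈ m.divisors, d) + 1 := by
        rcases Nat.eq_zero_or_pos i with rfl | hipos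
        · have hm1 : m = 1 := by rw [hmdef]; simp
          have hp2 : p = 2 := hhead
          rw [hm1, hp2]
          simp [Nat.divisors_one]
        · have h2m : 2 ∣ m := by
            have h20 : (2 : ℕ) ∈ l.take i := by
              rw [← hhead]
              exact List.mem_take_iff_getElem.mpr ⟨0, by omega, rfl⟩
            have hmem : (2 : ℕ) ^ n.factorization 2
                ∈ (l.take i).map (fun p => p ^ n.factorization p) :=
              List.mem_map_of_mem h20
            have hv : 0 < n.factorization 2 :=
              Nat.Prime.factorization_pos_of_dvd Nat.prime_two hn0 heven
            exact (dvd_pow_self 2 hv.ne').trans (hmdef ▸ List.dvd_prod hmem)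
          have hcnd := hcond ⟨i, hi⟩
          rw [phiStar_prime p hp] at hcnd
          have hSfle := Sf_le m hm0 h2m
          have : Sf phiStar (((l.take i).map fun p => p ^ n.factorization p).prod)
              = Sf phiStar m := by rw [hmdef]
          rw [this] at hcnd
          omega
      rw [hprod]
      exact step m p hm0 hp hpm hple hmPr _
  have hall := key l.length le_rfl
  rw [List.take_length] at hall
  have hln : ((l.map fun p => p ^ n.factorization p)).prod = n := by
    rw [← List.prod_toFinset _ hnd, htf]
    conv_rhs => rw [← Nat.factorization_prod_pow_eq_self hn0]
    rw [Finsupp.prod]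
    rfl
  rw [hln] at hall
  intro m₀ _ hle
  exact hall m₀ hle
end

section
/- Suppose w_1, ..., w_t and u_1, ..., u_t are positive integers with w_1 > w_2 > ··· > w_t. Let S = ∑_{i=1}^t w_i and T = ∑_{i=1}^t u_i·w_i. Suppose that every positive integer up to S is a subset sum of the w_i's (i.e., equals ∑_{i ∈ A} w_i for some subset A of {1,...,t}). Then every positive integer m ≤ T can be written in the form m = ∑_{i=1}^t a_i·w_i where each a_i is an integer with 0 ≤ a_i ≤ u_i. -/
open Finset

/-- If w_1 > w_2 > ⋯ > w_t are positive integers, u_1, ..., u_t are positive integers,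
S = ∑ w_i, T = ∑ u_i w_i, and each positive integer up to S is a subset sum of the w_i's,
then each positive m ≤ T can be written as m = ∑ a_i w_i with 0 ≤ a_i ≤ u_i. -/
theorem stmt14 (t : ℕ) (w u : Fin t → ℕ)
    (hwpos : ∀ i, 0 < w i) (hupos : ∀ i, 0 < u i)
    (hanti : ∀ i j : Fin t, i < j → w j < w i)
    (S T : ℕ) (hS : S = ∑ i, w i) (hT : T = ∑ i, u i * w i)
    (hsub : ∀ m : ℕ, 0 < m → m ≤ S → ∃ A : Finset (Fin t), m = ∑ i ∈ A, w i) :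
    ∀ m : ℕ, 0 < m → m ≤ T →
      ∃ a : Fin t → ℕ, (∀ i, a i ≤ u i) ∧ m = ∑ i, a i * w i := by
  subst hS hT
  suffices h : ∀ N (u : Fin t → ℕ), (∀ i, 0 < u i) → ∑ i, u i = N →
      ∀ m, 0 < m → m ≤ ∑ i, u i * w i →
      ∃ a : Fin t → ℕ, (∀ i, a i ≤ u i) ∧ m = ∑ i, a i * w i by
    exact fun m hm hmT => h (∑ i, u i) u hupos rfl m hm hmT
  intro N
  induction N using Nat.strong_induction_on with
  | _ N ih =>
    intro u hu hN m hm hmT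
    by_cases hmS : m ≤ ∑ i, w i
    · obtain ⟨A, hA⟩ := hsub m hm hmS
      refine ⟨fun i => if i ∈ A then 1 else 0, fun i => ?_, ?_⟩
      · dsimp only
        split
        · exact hu i
        · exact Nat.zero_le _
      · rw [hA]
        simp [ite_mul, Finset.sum_ite_mem]
    · push_neg at hmS
      have hj : ∃ j, 2 ≤ u j := by
        by_contra h
        push_neg at h
        have hle : ∑ i, u i * w i ≤ ∑ i, w i := by
          apply Finset.sum_le_sum
          intro i _
          have h1 := h i
          have h2 := hu i
          have : u i = 1 := by omega
          simp [this]
        omega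
      obtain ⟨j, hj⟩ := hj
      have hwjS : w j ≤ ∑ i, w i :=
        Finset.single_le_sum (fun i _ => (hwpos i).le) (mem_univ j)
      have hujT : u j * w j ≤ ∑ i, u i * w i :=
        Finset.single_le_sum (f := fun i => u i * w i) (fun i _ => Nat.zero_le _) (mem_univ j)
      set u' := Function.update u j (u j - 1) with hu'def
      have hu'pos : ∀ i, 0 < u' i := by
        intro i
        by_cases hij : i = j
        · subst hij; simp [hu'def]; omega
        · simp [hu'def, Function.update_of_ne hij]; exact hu i
      have hsplit : ∑ i, u i * w i = u j * w j + ∑ i ∈ univ.erase j, u i * w i := by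
        rw [← Finset.add_sum_erase _ _ (mem_univ j)]
      have hsum' : ∑ i, u' i * w i = (u j - 1) * w j + ∑ i ∈ univ.erase j, u i * w i := by
        rw [← Finset.add_sum_erase _ (fun i => u' i * w i) (mem_univ j)]
        congr 1
        · simp [hu'def]
        · apply Finset.sum_congr rfl
          intro i hi
          rw [hu'def, Function.update_of_ne (Finset.ne_of_mem_erase hi)]
      have hmul : (u j - 1) * w j + w j = u j * w j := by
        conv_rhs => rw [← Nat.sub_add_cancel (hu j)]
        ring
      have hsum2 : ∑ i, u' i * w i + w j = ∑ i, u i * w i := by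
        rw [hsum', hsplit]; omega
      have hN' : ∑ i, u' i = N - 1 := by
        rw [← hN, ← Finset.add_sum_erase _ u' (mem_univ j),
          ← Finset.add_sum_erase _ u (mem_univ j)]
        have : ∑ i ∈ univ.erase j, u' i = ∑ i ∈ univ.erase j, u i :=
          Finset.sum_congr rfl fun i hi =>
            Function.update_of_ne (Finset.ne_of_mem_erase hi) _ _
        rw [this]
        simp [hu'def]
        omega
      have hNpos : 2 ≤ N := by
        rw [← hN]
        calc 2 ≤ u j := hj
        _ ≤ ∑ i, u i := Finset.single_le_sum (fun i _ => Nat.zero_le _) (mem_univ j)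
      have hwj := hwpos j
      obtain ⟨a', ha'le, ha'sum⟩ := ih (N - 1) (by omega) u' hu'pos hN' (m - w j)
        (by omega)
        (by omega)
      refine ⟨Function.update a' j (a' j + 1), fun i => ?_, ?_⟩
      · by_cases hij : i = j
        · rw [hij]
          simp only [Function.update_self]
          have h1 := ha'le j
          rw [hu'def, Function.update_self] at h1
          omega
        · rw [Function.update_of_ne hij]
          have := ha'le i
          rwa [hu'def, Function.update_of_ne hij] at this
      · have hsplita : ∑ i, Function.update a' j (a' j + 1) i * w i
            = (a' j + 1) * w j + ∑ i ∈ univ.erase j, a' i * w i := by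
          rw [← Finset.add_sum_erase _ (fun i => Function.update a' j (a' j + 1) i * w i)
            (mem_univ j)]
          congr 1
          · simp
          · apply Finset.sum_congr rfl
            intro i hi
            rw [Function.update_of_ne (Finset.ne_of_mem_erase hi)]
        have hsplita' : ∑ i, a' i * w i = a' j * w j + ∑ i ∈ univ.erase j, a' i * w i := by
          rw [← Finset.add_sum_erase _ _ (mem_univ j)]
        have hmul2 : (a' j + 1) * w j = a' j * w j + w j := by ring
        omega
end

section
/- Every λ*-practical number is λ-practical. That is, if n is a positive integer such that every positive integer m ≤ S_λ(n) can be written as ∑_{d ∈ D} λ(d) for some set D of distinct divisors of n, then for every positive integer m ≤ n there exist integers m_d (for d | n) with 0 ≤ m_d ≤ φ(d)/λ(d) and m = ∑_{d | n} λ(d)·m_d. -/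
open Finset

/-- The Carmichael function: the least positive k such that a^k ≡ 1 (mod n) for all a
coprime to n. -/
noncomputable def carmichael (n : ℕ) : ℕ :=
  sInf {k : ℕ | 0 < k ∧ ∀ a : ℕ, Nat.Coprime a n → a ^ k ≡ 1 [MOD n]}

lemma carmichael_mem (d : ℕ) (hd : 0 < d) :
    0 < carmichael d ∧ ∀ a : ℕ, Nat.Coprime a d → a ^ carmichael d ≡ 1 [MOD d] := by
  have h : d.totient ∈ {k : ℕ | 0 < k ∧ ∀ a : ℕ, Nat.Coprime a d → a ^ k ≡ 1 [MOD d]} :=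
    ⟨Nat.totient_pos.mpr hd, fun a ha => Nat.ModEq.pow_totient ha⟩
  exact Nat.sInf_mem ⟨_, h⟩

lemma carmichael_dvd_totient (d : ℕ) (hd : 0 < d) : carmichael d ∣ d.totient := by
  obtain ⟨hc, hpow⟩ := carmichael_mem d hd
  set c := carmichael d with hcdef
  set r := d.totient % c with hr
  rcases Nat.eq_zero_or_pos r with h | h
  · exact Nat.dvd_of_mod_eq_zero h
  · exfalso
    have hmem : r ∈ {k : ℕ | 0 < k ∧ ∀ a : ℕ, Nat.Coprime a d → a ^ k ≡ 1 [MOD d]} := by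
      refine ⟨h, fun a ha => ?_⟩
      have h1 : a ^ d.totient ≡ 1 [MOD d] := Nat.ModEq.pow_totient ha
      have h2 : a ^ d.totient = (a ^ c) ^ (d.totient / c) * a ^ r := by
        rw [← pow_mul, ← pow_add, Nat.div_add_mod]
      have h3 : (a ^ c) ^ (d.totient / c) * a ^ r ≡ 1 ^ (d.totient / c) * a ^ r [MOD d] :=
        Nat.ModEq.mul ((hpow a ha).pow _) (Nat.ModEq.refl _)
      have h4 : a ^ r ≡ a ^ d.totient [MOD d] := by
        rw [h2]; simpa using h3.symm
      exact h4.trans h1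
    have h5 : carmichael d ≤ r := Nat.sInf_le hmem
    have hlt : r < c := Nat.mod_lt _ hc
    omega

lemma key (D : Finset ℕ) (f q : ℕ → ℕ) (hq : ∀ d ∈ D, 1 ≤ q d)
    (base : ∀ m : ℕ, 0 < m → m ≤ ∑ d ∈ D, f d →
      ∃ c : ℕ → ℕ, (∀ d ∈ D, c d ≤ 1) ∧ m = ∑ d ∈ D, f d * c d) :
    ∀ k : ℕ, 1 ≤ k → ∀ m : ℕ, 0 < m → m ≤ ∑ d ∈ D, f d * min (q d) k →
      ∃ c : ℕ → ℕ, (∀ d ∈ D, c d ≤ min (q d) k) ∧ m = ∑ d ∈ D, f d * c d := by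
  intro k hk
  induction k, hk using Nat.le_induction with
  | base =>
    intro m hm hle
    have hEq : ∑ d ∈ D, f d * min (q d) 1 = ∑ d ∈ D, f d := by
      apply Finset.sum_congr rfl
      intro d hd
      have := hq d hd
      have : min (q d) 1 = 1 := by omega
      rw [this, mul_one]
    rw [hEq] at hle
    obtain ⟨c, hc1, hc2⟩ := base m hm hle
    exact ⟨c, fun d hd => by have := hq d hd; have := hc1 d hd; omega, hc2⟩
  | succ k hk ih =>
    intro m hm hle
    rcases le_or_gt m (∑ d ∈ D, f d * min (q d) k) with h | h
    · obtain ⟨c, hc1, hc2⟩ := ih m hm h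
      exact ⟨c, fun d hd => le_trans (hc1 d hd) (by have := hq d hd; omega), hc2⟩
    · set Δ := ∑ d ∈ D, f d * (min (q d) (k + 1) - min (q d) k) with hΔ
      have hΔle : Δ ≤ ∑ d ∈ D, f d * min (q d) k := by
        apply Finset.sum_le_sum
        intro d hd
        have := hq d hd
        exact Nat.mul_le_mul_left _ (by omega)
      have hsplit : ∑ d ∈ D, f d * min (q d) (k + 1)
          = (∑ d ∈ D, f d * min (q d) k) + Δ := by
        rw [hΔ, ← Finset.sum_add_distrib]
        apply Finset.sum_congr rfl
        intro d hd
        have h1 : min (q d) k ≤ min (q d) (k + 1) := by omega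
        rw [← Nat.mul_add]
        congr 1
        omega
      have hm' : 0 < m - Δ := by omega
      have hle' : m - Δ ≤ ∑ d ∈ D, f d * min (q d) k := by omega
      obtain ⟨c, hc1, hc2⟩ := ih (m - Δ) hm' hle'
      refine ⟨fun d => c d + (min (q d) (k + 1) - min (q d) k), fun d hd => ?_, ?_⟩
      · have := hc1 d hd
        show c d + (min (q d) (k + 1) - min (q d) k) ≤ min (q d) (k + 1)
        omega
      · have : ∑ d ∈ D, f d * (c d + (min (q d) (k + 1) - min (q d) k))
            = (∑ d ∈ D, f d * c d) + Δ := by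
          rw [hΔ, ← Finset.sum_add_distrib]
          apply Finset.sum_congr rfl
          intro d hd
          rw [Nat.mul_add]
        rw [this, ← hc2]
        omega

/-- Every λ*-practical number is λ-practical. -/
theorem stmt15 (n : ℕ) (hn : FPractical carmichael n) :
    ∀ m : ℕ, 0 < m → m ≤ n →
      ∃ c : ℕ → ℕ, (∀ d ∈ n.divisors, c d ≤ Nat.totient d / carmichael d) ∧
        m = ∑ d ∈ n.divisors, carmichael d * c d := by
  obtain ⟨hn0, hbase⟩ := hn
  intro m hm hmn
  set q : ℕ → ℕ := fun d => d.totient / carmichael d with hqdef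
  have hq1 : ∀ d ∈ n.divisors, 1 ≤ q d := by
    intro d hd
    have hd0 : 0 < d := Nat.pos_of_mem_divisors hd
    have hdvd := carmichael_dvd_totient d hd0
    have htpos : 0 < d.totient := Nat.totient_pos.mpr hd0
    exact Nat.one_le_div_iff (carmichael_mem d hd0).1 |>.mpr (Nat.le_of_dvd htpos hdvd)
  have hmul : ∀ d ∈ n.divisors, carmichael d * q d = d.totient := by
    intro d hd
    have hd0 : 0 < d := Nat.pos_of_mem_divisors hd
    exact Nat.mul_div_cancel' (carmichael_dvd_totient d hd0)
  have hmin : ∀ d ∈ n.divisors, min (q d) n = q d := by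
    intro d hd
    have hd0 : 0 < d := Nat.pos_of_mem_divisors hd
    have h1 : q d ≤ d.totient := Nat.div_le_self _ _
    have h2 : d.totient ≤ d := Nat.totient_le d
    have h3 : d ≤ n := Nat.le_of_dvd hn0 (Nat.dvd_of_mem_divisors hd)
    omega
  have hbase' : ∀ m : ℕ, 0 < m → m ≤ ∑ d ∈ n.divisors, carmichael d →
      ∃ c : ℕ → ℕ, (∀ d ∈ n.divisors, c d ≤ 1) ∧
        m = ∑ d ∈ n.divisors, carmichael d * c d := by
    intro m hm hle
    obtain ⟨D', hD'sub, hD'sum⟩ := hbase m hm hle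
    refine ⟨fun d => if d ∈ D' then 1 else 0, fun d _ => by dsimp only; split <;> omega, ?_⟩
    calc m = ∑ d ∈ D', carmichael d := hD'sum
      _ = ∑ d ∈ n.divisors.filter (· ∈ D'), carmichael d := by
          congr 1
          rw [Finset.filter_mem_eq_inter, Finset.inter_eq_right.mpr hD'sub]
      _ = ∑ d ∈ n.divisors, if d ∈ D' then carmichael d else 0 :=
          Finset.sum_filter _ _
      _ = ∑ d ∈ n.divisors, carmichael d * (if d ∈ D' then 1 else 0) := by
          apply Finset.sum_congr rfl
          intro d _
          split <;> simp
  have hsum : ∑ d ∈ n.divisors, carmichael d * min (q d) n = n := by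
    calc ∑ d ∈ n.divisors, carmichael d * min (q d) n
        = ∑ d ∈ n.divisors, d.totient := by
          apply Finset.sum_congr rfl
          intro d hd
          rw [hmin d hd, hmul d hd]
      _ = n := Nat.sum_totient n
  obtain ⟨c, hc1, hc2⟩ := key n.divisors carmichael q hq1 hbase' n hn0 m hm (by omega)
  exact ⟨c, fun d hd => by have := hc1 d hd; rw [hmin d hd] at this; exact this, hc2⟩
end
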